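/- arXiv:2103.03965 — 3 statements merged into one kernel-verified Lean document; each statement's English description precedes it below -/
import Mathlib

section
/- Let n ≥ 2 be an integer and let p be a real number with 1 − (1/2)^(1/n) ≤ p ≤ 1/2. Then for μ_p^{⊗n}-almost every tuple (x₁, …, xₙ) ∈ (3^ω)ⁿ (product of n copies of μ_p), the intersection ⋂_{i=1}^{n} [T_{xᵢ}] is empty. -/
open MeasureTheory

/-- The list of children of node `τ` produced by code symbol `i`:
`0` gives only the left child, `1` only the right child, `2` both. -/
def children (τ : List Bool) (i : Fin 3) : List (List Bool) :=
  if i = 0 then [τ ++ [false]]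
  else if i = 1 then [τ ++ [true]]
  else [τ ++ [false], τ ++ [true]]

/-- `levels x n = (L, c)` where `L` is the list of nodes of the coded tree `T_x` at level `n`,
in lexicographic order, and `c` is the number of code symbols of `x` consumed by levels `< n`.
Processing nodes level by level in lexicographic order is exactly length-lexicographic order. -/
def levels (x : ℕ → Fin 3) : ℕ → List (List Bool) × ℕ
  | 0 => ([[]], 0)
  | n + 1 =>
    let p := levels x n
    ((p.1.zipIdx.map fun q => children q.1 (x (p.2 + q.2))).flatten, p.2 + p.1.length)

/-- The subtree `T_x ⊆ 2^{<ω}` (with no dead ends) coded by `x ∈ 3^ω`. -/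
def treeOf (x : ℕ → Fin 3) : Set (List Bool) :=
  {σ | σ ∈ (levels x σ.length).1}

/-- `[T]`, the set of infinite paths through a set `T` of finite binary strings. -/
def pathsOf (T : Set (List Bool)) : Set (ℕ → Bool) :=
  {y | ∀ n : ℕ, (List.ofFn fun i : Fin n => y i) ∈ T}

/-- One-coordinate Bernoulli probabilities: `0 ↦ p`, `1 ↦ q`, `2 ↦ 1 - p - q`. -/
def bern3 (p q : ℝ) (i : Fin 3) : ℝ :=
  if i = 0 then p else if i = 1 then q else 1 - p - q

/-- `μ` is the Bernoulli product measure `μ_{⟨p,q⟩}` on `3^ω`: it is a probability measure whose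
coordinates are i.i.d. with distribution `bern3 p q`, as expressed by its values on cylinders. -/
def IsBernoulliMeasure (p q : ℝ) (μ : Measure (ℕ → Fin 3)) : Prop :=
  IsProbabilityMeasure μ ∧
    ∀ σ : List (Fin 3),
      μ {x | ∀ i : Fin σ.length, x i = σ.get i} =
        ENNReal.ofReal ((σ.map (bern3 p q)).prod)

open List


section
variable {α β : Type*}

lemma flatMap_add_prod (f : α → ℝ) (A B : β → List α) (l : List β) :
    ((l.flatMap (fun j => A j ++ B j)).map f).prod
      = ((l.flatMap A).map f).prod * ((l.flatMap B).map f).prod := by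
  induction l with
  | nil => simp
  | cons j l ih => simp [List.flatMap_cons, List.prod_append, ih]; ring
end

inductive PTk : ℕ → Type
  | leaf : PTk 0
  | n0 : ∀ {k}, PTk k → PTk (k+1)
  | n1 : ∀ {k}, PTk k → PTk (k+1)
  | n2 : ∀ {k}, PTk k → PTk k → PTk (k+1)
  deriving DecidableEq


def ptkEquiv (k : ℕ) : PTk (k+1) ≃ (PTk k ⊕ PTk k ⊕ PTk k × PTk k) where
  toFun t := match t with
    | .n0 a => .inl a
    | .n1 a => .inr (.inl a)
    | .n2 a b => .inr (.inr (a, b))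
  invFun c := match c with
    | .inl a => .n0 a
    | .inr (.inl a) => .n1 a
    | .inr (.inr (a, b)) => .n2 a b
  left_inv t := by cases t <;> rfl
  right_inv c := by rcases c with a | a | ⟨a, b⟩ <;> rfl

instance instFintypePTk : ∀ k, Fintype (PTk k)
  | 0 => ⟨{PTk.leaf}, fun t => by cases t; simp⟩
  | (k+1) => letI := instFintypePTk k; Fintype.ofEquiv _ (ptkEquiv k).symm

namespace PTk
/-- nodes at level j (paths from root, root-first bit order) -/
def lvN : ∀ {k}, PTk k → ℕ → List (List Bool)
  | _, _, 0 => [[]]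
  | _, .leaf, (_+1) => []
  | _, .n0 a, (j+1) => (lvN a j).map (false :: ·)
  | _, .n1 a, (j+1) => (lvN a j).map (true :: ·)
  | _, .n2 a b, (j+1) => (lvN a j).map (false :: ·) ++ (lvN b j).map (true :: ·)

/-- symbols at level j, in lex node order -/
def lvS : ∀ {k}, PTk k → ℕ → List (Fin 3)
  | _, .leaf, _ => []
  | _, .n0 _, 0 => [0]
  | _, .n1 _, 0 => [1]
  | _, .n2 _ _, 0 => [2]
  | _, .n0 a, (j+1) => lvS a j
  | _, .n1 a, (j+1) => lvS a j
  | _, .n2 a b, (j+1) => lvS a j ++ lvS b j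

def W (p : ℝ) : ∀ {k}, PTk k → ℝ
  | _, .leaf => 1
  | _, .n0 a => p * W p a
  | _, .n1 a => p * W p a
  | _, .n2 a b => (1 - 2*p) * (W p a * W p b)

def hasLeaf : ∀ {k}, PTk k → List Bool → Bool
  | _, .leaf, [] => true
  | _, .leaf, (_ :: _) => false
  | _, .n0 _, [] => false
  | _, .n1 _, [] => false
  | _, .n2 _ _, [] => false
  | _, .n0 a, (false :: σ) => hasLeaf a σ
  | _, .n0 _, (true :: _) => false
  | _, .n1 _, (false :: _) => false
  | _, .n1 a, (true :: σ) => hasLeaf a σ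
  | _, .n2 a _, (false :: σ) => hasLeaf a σ
  | _, .n2 _ b, (true :: σ) => hasLeaf b σ

def code {k} (t : PTk k) : List (Fin 3) := (List.range k).flatMap (lvS t)

lemma lvN_zero : ∀ {k} (t : PTk k), lvN t 0 = [[]] := by
  intro k t; cases t <;> rfl

lemma length_lvN_eq_lvS : ∀ {k} (t : PTk k) (j : ℕ), j < k → (lvN t j).length = (lvS t j).length := by
  intro k t
  induction t with
  | leaf => intro j h; omega
  | n0 a ih => rintro (_|j) h; · rfl
               · simpa [lvN, lvS] using ih j (by omega)
  | n1 a ih => rintro (_|j) h; · rfl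
               · simpa [lvN, lvS] using ih j (by omega)
  | n2 a b iha ihb => rintro (_|j) h; · rfl
                      · simp [lvN, lvS, iha j (by omega), ihb j (by omega)]

lemma lvS_eq_nil : ∀ {k} (t : PTk k) (j : ℕ), k ≤ j → lvS t j = [] := by
  intro k t
  induction t with
  | leaf => intro j h; rfl
  | n0 a ih => rintro (_|j) h; · omega
               · simpa [lvS] using ih j (by omega)
  | n1 a ih => rintro (_|j) h; · omega
               · simpa [lvS] using ih j (by omega)
  | n2 a b iha ihb => rintro (_|j) h; · omega
                      · simp [lvS, iha j (by omega), ihb j (by omega)]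

lemma lvN_eq_nil : ∀ {k} (t : PTk k) (j : ℕ), k < j → lvN t j = [] := by
  intro k t
  induction t with
  | leaf => rintro (_|j) h; · omega
            · rfl
  | n0 a ih => rintro (_|j) h; · omega
               · simpa [lvN] using ih j (by omega)
  | n1 a ih => rintro (_|j) h; · omega
               · simpa [lvN] using ih j (by omega)
  | n2 a b iha ihb => rintro (_|j) h; · omega
                      · simp [lvN, iha j (by omega), ihb j (by omega)]

lemma mem_lvN_top : ∀ {k} (t : PTk k) (σ : List Bool), σ ∈ lvN t k ↔ hasLeaf t σ = true := by
  intro k t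
  induction t with
  | leaf => intro σ; cases σ with
            | nil => simp [lvN, hasLeaf]
            | cons c σ => simp [lvN, hasLeaf]
  | n0 a ih => intro σ; cases σ with
               | nil => simp [lvN, hasLeaf]
               | cons c σ => cases c <;> simp [lvN, hasLeaf, ih]
  | n1 a ih => intro σ; cases σ with
               | nil => simp [lvN, hasLeaf]
               | cons c σ => cases c <;> simp [lvN, hasLeaf, ih]
  | n2 a b iha ihb => intro σ; cases σ with
               | nil => simp [lvN, hasLeaf]
               | cons c σ => cases c <;> simp [lvN, hasLeaf, iha, ihb]



lemma code_def {k} (t : PTk k) : code t = (List.range k).flatMap (lvS t) := rfl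

lemma code_leaf : code .leaf = [] := rfl

lemma code_n0 {k} (a : PTk k) : code (n0 a) = 0 :: code a := by
  simp [code, List.range_succ_eq_map, List.flatMap_cons, List.flatMap_map, lvS]

lemma code_n1 {k} (a : PTk k) : code (n1 a) = 1 :: code a := by
  simp [code, List.range_succ_eq_map, List.flatMap_cons, List.flatMap_map, lvS]

lemma code_n2 {k} (a b : PTk k) :
    code (n2 a b) = 2 :: (List.range k).flatMap (fun j => lvS a j ++ lvS b j) := by
  simp [code, List.range_succ_eq_map, List.flatMap_cons, List.flatMap_map, lvS]

lemma codeW (p : ℝ) : ∀ {k} (t : PTk k), ((code t).map (bern3 p p)).prod = W p t := by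
  intro k t
  induction t with
  | leaf => simp [code_leaf, W]
  | n0 a ih => simp [code_n0, W, ← ih]; left; simp [bern3]
  | n1 a ih => simp [code_n1, W, ← ih]; left; simp [bern3]
  | n2 a b iha ihb =>
      rw [code_n2]
      simp only [List.map_cons, List.prod_cons]
      rw [flatMap_add_prod]
      rw [← code_def, ← code_def, iha, ihb]
      have : bern3 p p 2 = 1 - 2*p := by simp [bern3]; ring
      rw [this, W]

end PTk



lemma children_cons (c : Bool) (τ : List Bool) (s : Fin 3) :
    children (c :: τ) s = (children τ s).map (c :: ·) := by
  fin_cases s <;> simp [children]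

lemma enumFrom_children (x : ℕ → Fin 3) :
    ∀ (L : List (List Bool)) (c d : ℕ),
    ((L.zipIdx d).map fun q => children q.1 (x (c + q.2))).flatten
      = (List.zipWith children L ((List.range' (c + d) L.length).map x)).flatten := by
  intro L
  induction L with
  | nil => intro c d; rfl
  | cons a L ih =>
      intro c d
      simp only [List.zipIdx_cons, List.map_cons, List.flatten_cons, List.length_cons,
        List.range'_succ, List.zipWith_cons_cons]
      rw [ih c (d+1), show c + (d+1) = c + d + 1 from by omega]

lemma levels_succ (x : ℕ → Fin 3) (j : ℕ) :
    levels x (j+1) =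
      ((List.zipWith children (levels x j).1
          ((List.range' (levels x j).2 (levels x j).1.length).map x)).flatten,
       (levels x j).2 + (levels x j).1.length) := by
  rw [levels]
  have := enumFrom_children x (levels x j).1 (levels x j).2 0
  rw [this]
  simp

namespace PTk

lemma step_map (c : Bool) :
    ∀ (L : List (List Bool)) (S : List (Fin 3)),
    (List.zipWith children (L.map (c :: ·)) S).flatten
      = ((List.zipWith children L S).flatten).map (c :: ·) := by
  intro L
  induction L with
  | nil => intro S; simp
  | cons a L ih =>
      intro S
      cases S with
      | nil => simp
      | cons s S => simp [children_cons, ih]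

lemma step_lvN : ∀ {k} (t : PTk k) (j : ℕ), j < k →
    (List.zipWith children (lvN t j) (lvS t j)).flatten = lvN t (j+1) := by
  intro k t
  induction t with
  | leaf => intro j h; omega
  | n0 a ih =>
      rintro (_|j) h
      · simp [lvN, lvS, children]
      · simp only [lvN, lvS]
        rw [step_map, ih j (by omega)]
  | n1 a ih =>
      rintro (_|j) h
      · simp [lvN, lvS, children]
      · simp only [lvN, lvS]
        rw [step_map, ih j (by omega)]
  | n2 a b iha ihb =>
      rintro (_|j) h
      · simp [lvN, lvS, children]
      · simp only [lvN, lvS]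
        rw [List.zipWith_append
             (by simp [length_lvN_eq_lvS a j (by omega)]),
            List.flatten_append, step_map, step_map, iha j (by omega), ihb j (by omega)]

end PTk

def Cyl (σ : List (Fin 3)) : Set (ℕ → Fin 3) := {x | ∀ i : Fin σ.length, x i = σ.get i}

namespace PTk

def off {k} (t : PTk k) (j : ℕ) : ℕ := ((List.range j).map (fun i => (lvS t i).length)).sum

lemma off_zero {k} (t : PTk k) : off t 0 = 0 := rfl

lemma off_succ {k} (t : PTk k) (j : ℕ) : off t (j+1) = off t j + (lvS t j).length := by
  simp [off, List.range_succ]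

lemma code_decomp {k} (t : PTk k) (j : ℕ) (hj : j < k) :
    code t = (List.range j).flatMap (lvS t) ++ (lvS t j ++ (List.range' (j+1) (k-j-1)).flatMap (lvS t)) := by
  rw [code_def]
  have h1 : List.range k = List.range j ++ (j :: List.range' (j+1) (k-j-1)) := by
    have h := List.range'_append (s := 0) (m := j) (n := k-j) (step := 1)
    simp only [Nat.zero_add, Nat.one_mul] at h
    rw [show j + (k - j) = k from by omega] at h
    rw [List.range_eq_range', List.range_eq_range', ← h]
    congr 1
    rw [show k - j = (k-j-1)+1 from by omega, List.range'_succ]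
    simp
  rw [h1, List.flatMap_append, List.flatMap_cons]

lemma length_flatMap_range {k} (t : PTk k) (j : ℕ) :
    ((List.range j).flatMap (lvS t)).length = off t j := by
  rw [List.length_flatMap]; simp only [off, Function.comp_def]

lemma extract {k} (t : PTk k) (x : ℕ → Fin 3) (hx : x ∈ Cyl (code t))
    (j : ℕ) (hj : j < k) :
    (List.range' (off t j) (lvS t j).length).map x = lvS t j := by
  have hd := code_decomp t j hj
  have hlen : (code t).length = off t j + ((lvS t j).length + ((List.range' (j+1) (k-j-1)).flatMap (lvS t)).length) := by
    rw [hd]; simp [off, List.length_flatMap, Function.comp_def]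
  apply List.ext_getElem
  · simp
  · intro i h1 h2
    simp only [List.getElem_map, List.getElem_range']
    have hi : i < (lvS t j).length := by simpa using h2
    have hlt : off t j + 1 * i < (code t).length := by omega
    have := hx ⟨off t j + 1 * i, hlt⟩
    simp only [List.get_eq_getElem] at this
    rw [this, List.getElem_of_eq hd]
    rw [List.getElem_append_right (by rw [length_flatMap_range]; omega)]
    have hidx : t.off j + 1*i - ((List.range j).flatMap t.lvS).length = i := by
      rw [length_flatMap_range]; omega
    simp only [hidx]
    exact List.getElem_append_left hi

lemma run {k} (t : PTk k) (x : ℕ → Fin 3) (hx : x ∈ Cyl (code t)) :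
    ∀ j, j ≤ k → levels x j = (lvN t j, off t j) := by
  intro j
  induction j with
  | zero => intro _; rw [levels, lvN_zero, off_zero]
  | succ j ih =>
      intro hj
      have hjk : j < k := by omega
      rw [levels_succ, ih (by omega)]
      simp only
      rw [show (lvN t j).length = (lvS t j).length from length_lvN_eq_lvS t j hjk]
      rw [extract t x hx j hjk, step_lvN t j hjk, off_succ]

end PTk

namespace PTk

def cons3 (s : Fin 3) : PTk 1 :=
  if s = 0 then .n0 .leaf else if s = 1 then .n1 .leaf else .n2 .leaf .leaf

def nl : ∀ {k}, PTk k → ℕ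
  | _, .leaf => 1
  | _, .n0 a => nl a
  | _, .n1 a => nl a
  | _, .n2 a b => nl a + nl b

def graft : ∀ {k}, PTk k → (ℕ → Fin 3) → PTk (k+1)
  | _, .leaf, σ => cons3 (σ 0)
  | _, .n0 a, σ => .n0 (graft a σ)
  | _, .n1 a, σ => .n1 (graft a σ)
  | _, .n2 a b, σ => .n2 (graft a σ) (graft b (fun m => σ (nl a + m)))

lemma lvS_cons3_zero (s : Fin 3) : lvS (cons3 s) 0 = [s] := by
  fin_cases s <;> rfl

lemma lvS_graft_lt : ∀ {k} (t : PTk k) (σ : ℕ → Fin 3) (j : ℕ), j < k →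
    lvS (graft t σ) j = lvS t j := by
  intro k t
  induction t with
  | leaf => intro σ j h; omega
  | n0 a ih => rintro σ (_|j) h
               · rfl
               · simpa [graft, lvS] using ih σ j (by omega)
  | n1 a ih => rintro σ (_|j) h
               · rfl
               · simpa [graft, lvS] using ih σ j (by omega)
  | n2 a b iha ihb =>
      rintro σ (_|j) h
      · rfl
      · simp [graft, lvS, iha σ j (by omega), ihb _ j (by omega)]

lemma lvS_graft_top : ∀ {k} (t : PTk k) (σ : ℕ → Fin 3),
    lvS (graft t σ) k = (List.range (nl t)).map σ := by
  intro k t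
  induction t with
  | leaf => intro σ; simpa [nl, graft] using lvS_cons3_zero (σ 0)
  | n0 a ih => intro σ; simpa [graft, lvS, nl] using ih σ
  | n1 a ih => intro σ; simpa [graft, lvS, nl] using ih σ
  | n2 a b iha ihb =>
      intro σ
      simp only [graft, lvS, nl, iha σ, ihb]
      rw [List.range_add, List.map_append, List.map_map]
      rfl

lemma code_graft {k} (t : PTk k) (σ : ℕ → Fin 3) :
    code (graft t σ) = code t ++ (List.range (nl t)).map σ := by
  rw [code_def, code_def, List.range_succ, List.flatMap_append, List.flatMap_cons,
      List.flatMap_nil, List.append_nil, lvS_graft_top]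
  congr 1
  apply List.flatMap_congr
  intro j hj
  exact lvS_graft_lt t σ j (by simpa using hj)

end PTk

namespace PTk

def trunc (x : ℕ → Fin 3) : ∀ k, PTk k
  | 0 => .leaf
  | (k+1) => graft (trunc x k) (fun m => x ((code (trunc x k)).length + m))

lemma mem_cyl_trunc (x : ℕ → Fin 3) : ∀ k, x ∈ Cyl (code (trunc x k)) := by
  intro k
  induction k with
  | zero => intro ⟨i, hi⟩; simp [trunc, code_leaf] at hi
  | succ k ih =>
      intro ⟨i, hi⟩
      simp only [trunc, code_graft] at hi
      simp only [List.get_eq_getElem, trunc]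
      rw [List.getElem_of_eq (code_graft _ _)]
      rcases lt_or_ge i (code (trunc x k)).length with h | h
      · rw [List.getElem_append_left h]
        have := ih ⟨i, h⟩
        simpa using this
      · rw [List.getElem_append_right h]
        simp only [List.getElem_map, List.getElem_range]
        congr 1
        omega

lemma filterMap_heads_false (A : List (List Bool)) :
    (A.map (false :: ·)).filterMap
      (fun l => match l with | (false :: τ) => some τ | _ => none) = A := by
  induction A with
  | nil => rfl
  | cons a A ih => simp [List.filterMap_cons, ih]

lemma filterMap_heads_true_false (B : List (List Bool)) :
    (B.map (true :: ·)).filterMap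
      (fun l => match l with | (false :: τ) => some τ | _ => none) = [] := by
  induction B with
  | nil => rfl
  | cons a B ih => simp [List.filterMap_cons, ih]

lemma filterMap_heads_true (B : List (List Bool)) :
    (B.map (true :: ·)).filterMap
      (fun l => match l with | (true :: τ) => some τ | _ => none) = B := by
  induction B with
  | nil => rfl
  | cons a B ih => simp [List.filterMap_cons, ih]

lemma filterMap_heads_false_true (A : List (List Bool)) :
    (A.map (false :: ·)).filterMap
      (fun l => match l with | (true :: τ) => some τ | _ => none) = [] := by
  induction A with
  | nil => rfl
  | cons a A ih => simp [List.filterMap_cons, ih]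

lemma split_heads {A B A' B' : List (List Bool)}
    (h : A.map (false :: ·) ++ B.map (true :: ·) = A'.map (false :: ·) ++ B'.map (true :: ·)) :
    A = A' ∧ B = B' := by
  constructor
  · have h2 := congrArg (List.filterMap
      (fun l => match l with | (false :: τ) => some τ | _ => none)) h
    rw [List.filterMap_append, List.filterMap_append, filterMap_heads_false,
        filterMap_heads_false, filterMap_heads_true_false, filterMap_heads_true_false,
        List.append_nil, List.append_nil] at h2
    exact h2
  · have h2 := congrArg (List.filterMap
      (fun l => match l with | (true :: τ) => some τ | _ => none)) h
    rw [List.filterMap_append, List.filterMap_append, filterMap_heads_true,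
        filterMap_heads_true, filterMap_heads_false_true, filterMap_heads_false_true,
        List.nil_append, List.nil_append] at h2
    exact h2

lemma cons_inj_list (c : Bool) : Function.Injective (c :: · : List Bool → List Bool) :=
  fun a b hab => by simpa using hab

lemma determined : ∀ {k} (t t' : PTk k),
    (∀ j, lvN t j = lvN t' j) → (∀ j, lvS t j = lvS t' j) → t = t' := by
  intro k t
  induction t with
  | leaf => intro t' _ _; cases t'; rfl
  | n0 a ih =>
      intro t' hN hS
      cases t' with
      | n0 a' =>
          congr 1
          refine ih a' (fun j => ?_) (fun j => hS (j+1))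
          have := hN (j+1)
          simp only [lvN] at this
          exact List.map_injective_iff.2 (cons_inj_list false) this
      | n1 a' => have := hS 0; simp [lvS] at this
      | n2 a' b' => have := hS 0; simp [lvS] at this
  | n1 a ih =>
      intro t' hN hS
      cases t' with
      | n1 a' =>
          congr 1
          refine ih a' (fun j => ?_) (fun j => hS (j+1))
          have := hN (j+1)
          simp only [lvN] at this
          exact List.map_injective_iff.2 (cons_inj_list true) this
      | n0 a' => have := hS 0; simp [lvS] at this
      | n2 a' b' => have := hS 0; simp [lvS] at this
  | @n2 k' a b iha ihb =>
      intro t' hN hS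
      cases t' with
      | n0 a' => have := hS 0; simp [lvS] at this
      | n1 a' => have := hS 0; simp [lvS] at this
      | n2 a' b' =>
          have hNab : ∀ j, lvN a j = lvN a' j ∧ lvN b j = lvN b' j := by
            intro j
            have := hN (j+1)
            simp only [lvN] at this
            exact split_heads this
          have hSab : ∀ j, lvS a j = lvS a' j ∧ lvS b j = lvS b' j := by
            intro j
            have := hS (j+1)
            simp only [lvS] at this
            rcases lt_or_ge j k' with hj | hj
            · refine List.append_inj this ?_
              rw [← length_lvN_eq_lvS a j hj, ← length_lvN_eq_lvS a' j hj, (hNab j).1]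
            · simp [lvS_eq_nil a j hj, lvS_eq_nil a' j hj, lvS_eq_nil b j hj, lvS_eq_nil b' j hj]
          congr 1
          · exact iha a' (fun j => (hNab j).1) (fun j => (hSab j).1)
          · exact ihb b' (fun j => (hNab j).2) (fun j => (hSab j).2)

lemma cyl_unique {k} (t t' : PTk k) (x : ℕ → Fin 3)
    (h : x ∈ Cyl (code t)) (h' : x ∈ Cyl (code t')) : t = t' := by
  have hrun := run t x h
  have hrun' := run t' x h'
  have hN : ∀ j, lvN t j = lvN t' j := by
    intro j
    rcases le_or_gt j k with hj | hj
    · have := (hrun j hj).symm.trans (hrun' j hj)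
      exact congrArg Prod.fst this
    · rw [lvN_eq_nil t j hj, lvN_eq_nil t' j hj]
  have hoff : ∀ j, j ≤ k → off t j = off t' j := by
    intro j hj
    have := (hrun j hj).symm.trans (hrun' j hj)
    exact congrArg Prod.snd this
  have hS : ∀ j, lvS t j = lvS t' j := by
    intro j
    rcases lt_or_ge j k with hj | hj
    · have e1 := extract t x h j hj
      have e2 := extract t' x h' j hj
      rw [← e1, ← e2, hoff j (le_of_lt hj)]
      congr 2
      rw [← length_lvN_eq_lvS t j hj, ← length_lvN_eq_lvS t' j hj, hN j]
    · rw [lvS_eq_nil t j hj, lvS_eq_nil t' j hj]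
  exact determined t t' hN hS

end PTk

namespace PTk

lemma W_nonneg {p : ℝ} (h0 : 0 ≤ p) (h2 : 2*p ≤ 1) : ∀ {k} (t : PTk k), 0 ≤ W p t := by
  intro k t
  induction t with
  | leaf => norm_num [W]
  | n0 a ih => exact mul_nonneg h0 ih
  | n1 a ih => exact mul_nonneg h0 ih
  | n2 a b iha ihb => exact mul_nonneg (by linarith) (mul_nonneg iha ihb)

lemma sum_PTk_zero {M : Type*} [AddCommMonoid M] (f : PTk 0 → M) : ∑ t, f t = f .leaf := by
  rw [show (Finset.univ : Finset (PTk 0)) = {PTk.leaf} from rfl, Finset.sum_singleton]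

lemma sum_PTk_succ {M : Type*} [AddCommMonoid M] {k : ℕ} (f : PTk (k+1) → M) :
    ∑ t, f t = (∑ a : PTk k, f (.n0 a))
      + ((∑ a : PTk k, f (.n1 a)) + ∑ c : PTk k × PTk k, f (.n2 c.1 c.2)) := by
  rw [← Equiv.sum_comp (ptkEquiv k).symm f, Fintype.sum_sum_type, Fintype.sum_sum_type]
  rfl

lemma sum_W (p : ℝ) : ∀ k, (∑ t : PTk k, W p t) = 1 := by
  intro k
  induction k with
  | zero => rw [sum_PTk_zero]; rfl
  | succ k ih =>
      rw [sum_PTk_succ (M := ℝ) (f := W p)]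
      have h2 : ∑ c : PTk k × PTk k, W p (PTk.n2 c.1 c.2)
          = (1 - 2*p) * ((∑ a : PTk k, W p a) * (∑ b : PTk k, W p b)) := by
        rw [Fintype.sum_prod_type, Finset.sum_mul_sum]
        simp only [Finset.mul_sum]
        rfl
      rw [h2, ih]
      have hn0 : ∑ a : PTk k, W p (PTk.n0 a) = p * ∑ a : PTk k, W p a := by
        rw [Finset.mul_sum]; rfl
      have hn1 : ∑ a : PTk k, W p (PTk.n1 a) = p * ∑ a : PTk k, W p a := by
        rw [Finset.mul_sum]; rfl
      rw [hn0, hn1, ih]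
      ring

def mk3 {k} (s : Fin 3) (a b : PTk k) : PTk (k+1) :=
  if s = 0 then .n0 a else if s = 1 then .n1 b else .n2 a b

lemma marg {p : ℝ} {k : ℕ} (F : PTk (k+1) → ℝ) :
    ∑ t : PTk (k+1), W p t * F t
      = ∑ s : Fin 3, ∑ a : PTk k, ∑ b : PTk k,
          (bern3 p p s * (W p a * W p b)) * F (mk3 s a b) := by
  have key : ∀ (c : ℝ), ∑ b : PTk k, W p b * c = c := fun c => by
    rw [← Finset.sum_mul, sum_W, one_mul]
  rw [sum_PTk_succ (fun t => W p t * F t), Fin.sum_univ_three]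
  have e0 : ∑ a : PTk k, ∑ b : PTk k, (bern3 p p 0 * (W p a * W p b)) * F (mk3 0 a b)
      = ∑ a : PTk k, W p (PTk.n0 a) * F (.n0 a) := by
    refine Finset.sum_congr rfl (fun a _ => ?_)
    have : ∀ b : PTk k, (bern3 p p 0 * (W p a * W p b)) * F (mk3 0 a b)
        = W p b * ((p * W p a) * F (.n0 a)) := by
      intro b; rw [show mk3 0 a b = PTk.n0 a from rfl, show bern3 p p 0 = p from rfl]; ring
    rw [Finset.sum_congr rfl (fun b _ => this b), key]
    rfl
  have e1 : ∑ a : PTk k, ∑ b : PTk k, (bern3 p p 1 * (W p a * W p b)) * F (mk3 1 a b)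
      = ∑ a : PTk k, W p (PTk.n1 a) * F (.n1 a) := by
    rw [Finset.sum_comm]
    refine Finset.sum_congr rfl (fun b _ => ?_)
    have : ∀ a : PTk k, (bern3 p p 1 * (W p a * W p b)) * F (mk3 1 a b)
        = W p a * ((p * W p b) * F (.n1 b)) := by
      intro a; rw [show mk3 1 a b = PTk.n1 b from rfl, show bern3 p p 1 = p from rfl]; ring
    rw [Finset.sum_congr rfl (fun a _ => this a), key]
    rfl
  have e2 : ∑ a : PTk k, ∑ b : PTk k, (bern3 p p 2 * (W p a * W p b)) * F (mk3 2 a b)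
      = ∑ c : PTk k × PTk k, W p (PTk.n2 c.1 c.2) * F (.n2 c.1 c.2) := by
    rw [Fintype.sum_prod_type]
    refine Finset.sum_congr rfl (fun a _ => Finset.sum_congr rfl (fun b _ => ?_))
    rw [show mk3 2 a b = PTk.n2 a b from rfl, show bern3 p p 2 = 1 - p - p from rfl]
    show _ = (1 - 2*p) * (W p a * W p b) * F (PTk.n2 a b)
    ring
  rw [e0, e1, e2]; ring

end PTk

section Tuples
variable {α β : Type*} [Fintype α] [Fintype β]

lemma sum_tuple_succ (w : α → ℝ) (N : ℕ) (G : (Fin (N+1) → α) → ℝ) :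
    ∑ T : Fin (N+1) → α, (∏ i, w (T i)) * G T
      = ∑ a : α, w a * ∑ T' : Fin N → α, (∏ i, w (T' i)) * G (Fin.cons a T') := by
  rw [← Equiv.sum_comp (Fin.consEquiv (fun _ => α)) (fun T => (∏ i, w (T i)) * G T),
      Fintype.sum_prod_type]
  refine Finset.sum_congr rfl (fun a _ => ?_)
  rw [Finset.mul_sum]
  refine Finset.sum_congr rfl (fun T' _ => ?_)
  have h : (Fin.consEquiv (fun _ => α)) (a, T') = Fin.cons a T' := rfl
  rw [h, Fin.prod_univ_succ]
  simp only [Fin.cons_zero, Fin.cons_succ]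
  ring

lemma sum_tuple_prod (g : α → ℝ) (N : ℕ) :
    ∑ T : Fin N → α, (∏ i, g (T i)) = (∑ a : α, g a)^N := by
  induction N with
  | zero => simp
  | succ N ih =>
      have := sum_tuple_succ g N (fun _ => 1)
      simp only [mul_one] at this
      rw [this, ih, pow_succ, ← Finset.sum_mul]
      ring

lemma tuple_marg (w : α → ℝ) (v : β → ℝ) (m : β → α)
    (hsingle : ∀ F : α → ℝ, ∑ t : α, w t * F t = ∑ c : β, v c * F (m c)) :
    ∀ (N : ℕ) (G : (Fin N → α) → ℝ),
      ∑ T : Fin N → α, (∏ i, w (T i)) * G T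
        = ∑ C : Fin N → β, (∏ i, v (C i)) * G (fun i => m (C i)) := by
  intro N
  induction N with
  | zero =>
      intro G
      rw [Fintype.sum_unique, Fintype.sum_unique]
      simp only [Finset.univ_eq_empty, Finset.prod_empty, one_mul]
      exact congrArg G (Subsingleton.elim _ _)
  | succ N ih =>
      intro G
      rw [sum_tuple_succ w N G, sum_tuple_succ v N (fun C => G (fun i => m (C i)))]
      rw [hsingle (fun a => ∑ T' : Fin N → α, (∏ i, w (T' i)) * G (Fin.cons a T'))]
      refine Finset.sum_congr rfl (fun c _ => ?_)
      congr 1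
      rw [ih (fun T' => G (Fin.cons (m c) T'))]
      refine Finset.sum_congr rfl (fun C' _ => ?_)
      have : (Fin.cons (m c) fun i => m (C' i)) = fun i => m ((Fin.cons c C' : Fin (N+1) → β) i) := by
        funext i
        refine Fin.cases ?_ ?_ i <;> simp [Fin.cons_zero, Fin.cons_succ]
      rw [this]

end Tuples

open PTk in
def goodT {n k : ℕ} (T : Fin n → PTk k) : Prop :=
  ∃ f : Fin k → Bool, ∀ i, hasLeaf (T i) (List.ofFn f) = true

instance {n k : ℕ} : DecidablePred (goodT (n := n) (k := k)) := fun _ => by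
  unfold goodT; infer_instance

open PTk

lemma hasLeaf_mk3_cons {k} (s : Fin 3) (a b : PTk k) (c : Bool) (σ : List Bool) :
    hasLeaf (mk3 s a b) (c :: σ)
      = if c then (decide (s ≠ 0) && hasLeaf b σ) else (decide (s ≠ 1) && hasLeaf a σ) := by
  fin_cases s <;> cases c <;> simp [mk3, hasLeaf]

lemma goodT_mk3 {n k : ℕ} (s : Fin n → Fin 3) (A B : Fin n → PTk k) :
    goodT (fun i => mk3 (s i) (A i) (B i))
      ↔ ((∀ i, s i ≠ 1) ∧ goodT A) ∨ ((∀ i, s i ≠ 0) ∧ goodT B) := by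
  constructor
  · rintro ⟨f, hf⟩
    have hof : List.ofFn f = f 0 :: List.ofFn (fun i : Fin k => f i.succ) := List.ofFn_succ (f := f)
    cases hc : f 0 with
    | false =>
        left
        have h' : ∀ i, (decide (s i ≠ 1) && hasLeaf (A i) (List.ofFn (fun j : Fin k => f j.succ))) = true := by
          intro i
          have := hf i
          rw [hof, hc, hasLeaf_mk3_cons] at this
          simpa using this
        refine ⟨fun i => ?_, ⟨fun j : Fin k => f j.succ, fun i => ?_⟩⟩
        · have := h' i; simp at this; exact this.1
        · have := h' i; simp at this; exact this.2
    | true =>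
        right
        have h' : ∀ i, (decide (s i ≠ 0) && hasLeaf (B i) (List.ofFn (fun j : Fin k => f j.succ))) = true := by
          intro i
          have := hf i
          rw [hof, hc, hasLeaf_mk3_cons] at this
          simpa using this
        refine ⟨fun i => ?_, ⟨fun j : Fin k => f j.succ, fun i => ?_⟩⟩
        · have := h' i; simp at this; exact this.1
        · have := h' i; simp at this; exact this.2
  · rintro (⟨hs, f, hf⟩ | ⟨hs, f, hf⟩)
    · refine ⟨Fin.cons false f, fun i => ?_⟩
      have hof : List.ofFn (Fin.cons false f : Fin (k+1) → Bool)
          = false :: List.ofFn f := by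
        rw [List.ofFn_succ]
        simp [Fin.cons_zero, Fin.cons_succ]
      rw [hof, hasLeaf_mk3_cons]
      simp [hs i, hf i]
    · refine ⟨Fin.cons true f, fun i => ?_⟩
      have hof : List.ofFn (Fin.cons true f : Fin (k+1) → Bool)
          = true :: List.ofFn f := by
        rw [List.ofFn_succ]
        simp [Fin.cons_zero, Fin.cons_succ]
      rw [hof, hasLeaf_mk3_cons]
      simp [hs i, hf i]

def Qd (p : ℝ) (n k : ℕ) : ℝ :=
  ∑ T : Fin n → PTk k, (∏ i, W p (T i)) * (if goodT T then 0 else 1)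

lemma Qd_zero (p : ℝ) (n : ℕ) : Qd p n 0 = 0 := by
  unfold Qd
  have : ∀ T : Fin n → PTk 0, goodT T := by
    intro T
    refine ⟨fun i => i.elim0, fun i => ?_⟩
    have : T i = PTk.leaf := by cases (T i); rfl
    rw [this]
    rfl
  rw [Finset.sum_congr rfl (fun T _ => by rw [if_pos (this T), mul_zero])]
  simp

lemma ite_prod_boole {n : ℕ} (P : Fin n → Prop) [DecidablePred P] :
    (if (∀ i, P i) then (1:ℝ) else 0) = ∏ i, (if P i then (1:ℝ) else 0) := by
  rw [Finset.prod_boole]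
  simp

lemma eval_sum (p q : ℝ) (n : ℕ) :
    ∑ s : Fin n → Fin 3, (∏ i, bern3 p p (s i)) *
        ((if (∀ i, s i ≠ 1) then q else 1) * (if (∀ i, s i ≠ 0) then q else 1))
      = 1 + 2*(1-p)^n*(q-1) + (1-2*p)^n*(q-1)^2 := by
  have expand : ∀ s : Fin n → Fin 3,
      (∏ i, bern3 p p (s i)) *
        ((if (∀ i, s i ≠ 1) then q else 1) * (if (∀ i, s i ≠ 0) then q else 1))
      = (∏ i, bern3 p p (s i))
        + (q-1) * (∏ i, bern3 p p (s i) * (if s i ≠ 1 then 1 else 0))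
        + (q-1) * (∏ i, bern3 p p (s i) * (if s i ≠ 0 then 1 else 0))
        + (q-1)^2 * (∏ i, bern3 p p (s i) *
            ((if s i ≠ 1 then 1 else 0) * (if s i ≠ 0 then 1 else 0))) := by
    intro s
    have hA : (if (∀ i, s i ≠ 1) then q else 1)
        = 1 + (q-1) * ∏ i, (if s i ≠ 1 then (1:ℝ) else 0) := by
      rw [← ite_prod_boole]
      by_cases h : ∀ i, s i ≠ 1 <;> simp [h]
    have hB : (if (∀ i, s i ≠ 0) then q else 1)
        = 1 + (q-1) * ∏ i, (if s i ≠ 0 then (1:ℝ) else 0) := by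
      rw [← ite_prod_boole]
      by_cases h : ∀ i, s i ≠ 0 <;> simp [h]
    rw [hA, hB]
    simp only [Finset.prod_mul_distrib]
    ring
  rw [Finset.sum_congr rfl (fun s _ => expand s)]
  simp only [Finset.sum_add_distrib, ← Finset.mul_sum]
  rw [sum_tuple_prod (bern3 p p) n,
      sum_tuple_prod (fun v : Fin 3 => bern3 p p v * if v ≠ 1 then (1:ℝ) else 0) n,
      sum_tuple_prod (fun v : Fin 3 => bern3 p p v * if v ≠ 0 then (1:ℝ) else 0) n,
      sum_tuple_prod (fun v : Fin 3 => bern3 p p v * ((if v ≠ 1 then (1:ℝ) else 0) * (if v ≠ 0 then (1:ℝ) else 0))) n]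
  have v1 : ∑ v : Fin 3, bern3 p p v = 1 := by
    rw [Fin.sum_univ_three]; simp [bern3]; try ring
  have v2 : ∑ v : Fin 3, bern3 p p v * (if v ≠ 1 then (1:ℝ) else 0) = 1 - p := by
    rw [Fin.sum_univ_three]; simp [bern3]; try ring
  have v3 : ∑ v : Fin 3, bern3 p p v * (if v ≠ 0 then (1:ℝ) else 0) = 1 - p := by
    rw [Fin.sum_univ_three]; simp [bern3]; try ring
  have v4 : ∑ v : Fin 3, bern3 p p v *
      ((if v ≠ 1 then (1:ℝ) else 0) * (if v ≠ 0 then (1:ℝ) else 0)) = 1 - 2*p := by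
    rw [Fin.sum_univ_three]; simp [bern3]; try ring
  rw [v1, v2, v3, v4]
  ring

def tripleEquiv (n : ℕ) (γ₁ γ₂ γ₃ : Type*) :
    (Fin n → γ₁ × γ₂ × γ₃) ≃ ((Fin n → γ₁) × (Fin n → γ₂) × (Fin n → γ₃)) where
  toFun C := (fun i => (C i).1, fun i => (C i).2.1, fun i => (C i).2.2)
  invFun z i := (z.1 i, z.2.1 i, z.2.2 i)
  left_inv C := by funext i; rfl
  right_inv z := rfl

@[simp] lemma tripleEquiv_symm_apply (n : ℕ) (γ₁ γ₂ γ₃ : Type*)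
    (z : (Fin n → γ₁) × (Fin n → γ₂) × (Fin n → γ₃)) :
    (tripleEquiv n γ₁ γ₂ γ₃).symm z = fun i => (z.1 i, z.2.1 i, z.2.2 i) := rfl

lemma Qd_succ (p : ℝ) (n k : ℕ) :
    Qd p n (k+1) = 1 + 2*(1-p)^n * (Qd p n k - 1) + (1-2*p)^n * (Qd p n k - 1)^2 := by
  classical
  have hsingle : ∀ F : PTk (k+1) → ℝ,
      ∑ t : PTk (k+1), W p t * F t
        = ∑ c : Fin 3 × PTk k × PTk k,
            (bern3 p p c.1 * (W p c.2.1 * W p c.2.2)) * F (mk3 c.1 c.2.1 c.2.2) := by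
    intro F
    rw [marg F, Fintype.sum_prod_type]
    exact Finset.sum_congr rfl fun s _ =>
      (Fintype.sum_prod_type (fun y : PTk k × PTk k =>
        (bern3 p p s * (W p y.1 * W p y.2)) * F (mk3 s y.1 y.2))).symm
  have step1 := tuple_marg (W p) (fun c : Fin 3 × PTk k × PTk k => bern3 p p c.1 * (W p c.2.1 * W p c.2.2))
      (fun c => mk3 c.1 c.2.1 c.2.2) hsingle n (fun T => if goodT T then 0 else 1)
  rw [Qd, step1]
  -- split the indicator and the products
  have step2 : ∀ C : Fin n → Fin 3 × PTk k × PTk k,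
      (∏ i, (bern3 p p (C i).1 * (W p (C i).2.1 * W p (C i).2.2)))
        * (if goodT (fun i => mk3 (C i).1 (C i).2.1 (C i).2.2) then (0:ℝ) else 1)
      = (∏ i, bern3 p p (C i).1) *
          (((∏ i, W p (C i).2.1) * (if ((∀ i, (C i).1 ≠ 1) ∧ goodT (fun i => (C i).2.1)) then (0:ℝ) else 1))
          * ((∏ i, W p (C i).2.2) * (if ((∀ i, (C i).1 ≠ 0) ∧ goodT (fun i => (C i).2.2)) then (0:ℝ) else 1))) := by
    intro C
    rw [Finset.prod_mul_distrib, Finset.prod_mul_distrib]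
    have hind : (if goodT (fun i => mk3 (C i).1 (C i).2.1 (C i).2.2) then (0:ℝ) else 1)
        = (if ((∀ i, (C i).1 ≠ 1) ∧ goodT (fun i => (C i).2.1)) then (0:ℝ) else 1)
          * (if ((∀ i, (C i).1 ≠ 0) ∧ goodT (fun i => (C i).2.2)) then (0:ℝ) else 1) := by
      rw [if_congr (goodT_mk3 (fun i => (C i).1) (fun i => (C i).2.1) (fun i => (C i).2.2)) rfl rfl]
      by_cases h1 : (∀ i, (C i).1 ≠ 1) ∧ goodT (fun i => (C i).2.1) <;>
        by_cases h2 : (∀ i, (C i).1 ≠ 0) ∧ goodT (fun i => (C i).2.2) <;>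
        simp [h1, h2]
    rw [hind]
    ring
  rw [Finset.sum_congr rfl (fun C _ => step2 C)]
  -- reindex to triples of tuples
  rw [← Equiv.sum_comp (tripleEquiv n (Fin 3) (PTk k) (PTk k)).symm, Fintype.sum_prod_type]
  simp only [tripleEquiv_symm_apply]
  have inner : ∀ s : Fin n → Fin 3,
      (∑ z : (Fin n → PTk k) × (Fin n → PTk k),
        (∏ i, bern3 p p (s i)) *
          (((∏ i, W p (z.1 i)) * (if ((∀ i, s i ≠ 1) ∧ goodT z.1) then (0:ℝ) else 1))
          * ((∏ i, W p (z.2 i)) * (if ((∀ i, s i ≠ 0) ∧ goodT z.2) then (0:ℝ) else 1))))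
      = (∏ i, bern3 p p (s i)) *
          ((if (∀ i, s i ≠ 1) then Qd p n k else 1) * (if (∀ i, s i ≠ 0) then Qd p n k else 1)) := by
    intro s
    rw [← Finset.mul_sum]
    congr 1
    rw [Fintype.sum_prod_type]
    have keyA : (∑ A : Fin n → PTk k,
        (∏ i, W p (A i)) * (if ((∀ i, s i ≠ 1) ∧ goodT A) then (0:ℝ) else 1))
        = (if (∀ i, s i ≠ 1) then Qd p n k else 1) := by
      by_cases h : ∀ i, s i ≠ 1
      · rw [if_pos h, Qd]
        refine Finset.sum_congr rfl (fun A _ => ?_)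
        congr 1
        simp [h]
      · rw [if_neg h]
        have : ∀ A : Fin n → PTk k,
            (∏ i, W p (A i)) * (if ((∀ i, s i ≠ 1) ∧ goodT A) then (0:ℝ) else 1)
            = ∏ i, W p (A i) := by
          intro A
          rw [if_neg (fun hc => h hc.1), mul_one]
        rw [Finset.sum_congr rfl (fun A _ => this A), sum_tuple_prod, sum_W, one_pow]
    have keyB : (∑ B : Fin n → PTk k,
        (∏ i, W p (B i)) * (if ((∀ i, s i ≠ 0) ∧ goodT B) then (0:ℝ) else 1))
        = (if (∀ i, s i ≠ 0) then Qd p n k else 1) := by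
      by_cases h : ∀ i, s i ≠ 0
      · rw [if_pos h, Qd]
        refine Finset.sum_congr rfl (fun B _ => ?_)
        congr 1
        simp [h]
      · rw [if_neg h]
        have : ∀ B : Fin n → PTk k,
            (∏ i, W p (B i)) * (if ((∀ i, s i ≠ 0) ∧ goodT B) then (0:ℝ) else 1)
            = ∏ i, W p (B i) := by
          intro B
          rw [if_neg (fun hc => h hc.1), mul_one]
        rw [Finset.sum_congr rfl (fun B _ => this B), sum_tuple_prod, sum_W, one_pow]
    rw [← keyA, ← keyB, Finset.sum_mul_sum]
  refine Eq.trans ?_ (eval_sum p (Qd p n k) n)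
  exact Finset.sum_congr rfl (fun s _ => inner s)

open Filter in
lemma tendsto_u (r b : ℝ) (hb0 : 0 ≤ b) (hbr : b ≤ r) (hr : 2*r ≤ 1)
    (hkey : 0 < b ∨ 2*r ≤ 1/2)
    (u : ℕ → ℝ) (hu0 : u 0 = 1) (hrec : ∀ k, u (k+1) = u k * (2*r - b * u k)) :
    Filter.Tendsto u Filter.atTop (nhds 0) := by
  have hr0 : 0 ≤ r := le_trans hb0 hbr
  have hb2 : b ≤ 1/2 := by linarith
  have hbound : ∀ k, 0 ≤ u k ∧ u k ≤ 1 := by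
    intro k; induction k with
    | zero => rw [hu0]; norm_num
    | succ k ih =>
        obtain ⟨h0, h1⟩ := ih
        rw [hrec k]
        constructor
        · apply mul_nonneg h0; nlinarith
        · nlinarith [mul_nonneg (mul_nonneg hb0 h0) h0,
            mul_nonneg (by linarith : (0:ℝ) ≤ 2*r) (by linarith : 0 ≤ 1 - u k)]
  have hnn : ∀ k, 0 ≤ u k := fun k => (hbound k).1
  rcases hkey with hb | hr2
  · have key : ∀ k : ℕ, u k ≤ 1/(1+k*b) := by
      intro k; induction k with
      | zero => rw [hu0]; norm_num
      | succ k ih =>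
          have h0 := (hbound k).1
          have h1 := (hbound k).2
          have hk0 : (0:ℝ) ≤ (k:ℝ) := Nat.cast_nonneg k
          have hd : (0:ℝ) < 1 + k*b := by nlinarith
          have hd2 : (0:ℝ) < 1 + ((k:ℕ)+1:ℕ)*b := by push_cast; nlinarith
          have hc1 : 1/(1+(k:ℝ)*b) ≤ 1 := by
            rw [div_le_one hd]; nlinarith
          have hc0 : 0 < 1/(1+(k:ℝ)*b) := by positivity
          rw [hrec k]
          have e1 : u k * (2*r - b*u k) ≤ u k * (1 - b * u k) := by nlinarith
          have e2 : u k * (1 - b*u k) ≤ (1/(1+k*b)) * (1 - b*(1/(1+k*b))) := by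
            have hfac : 0 ≤ (1/(1+(k:ℝ)*b) - u k) * (1 - b*(1/(1+(k:ℝ)*b)) - b*(u k)) := by
              apply mul_nonneg (by linarith)
              nlinarith
            nlinarith
          have e3 : (1/(1+(k:ℝ)*b)) * (1 - b*(1/(1+k*b))) ≤ 1/(1+((k:ℕ)+1:ℕ)*b) := by
            have hc : (1/(1+(k:ℝ)*b)) * (1+(k:ℝ)*b) = 1 := by field_simp
            have hcb : (b * (1/(1+(k:ℝ)*b))) * (1+(k:ℝ)*b) = b := by field_simp
            rw [le_div_iff₀ hd2]
            push_cast
            nlinarith [hc, hcb, sq_nonneg (b * (1/(1+(k:ℝ)*b))), hc0.le]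
          push_cast at e3 ⊢
          linarith
    refine squeeze_zero hnn key ?_
    have hden : Tendsto (fun k : ℕ => 1 + (k:ℝ)*b) atTop atTop := by
      apply Filter.tendsto_atTop_add_const_left
      exact Tendsto.atTop_mul_const hb tendsto_natCast_atTop_atTop
    have := hden.inv_tendsto_atTop
    simp only [one_div]; exact this
  · have key : ∀ k : ℕ, u k ≤ (2*r)^k := by
      intro k; induction k with
      | zero => rw [hu0]; norm_num
      | succ k ih =>
          rw [hrec k, pow_succ]
          have h0 := (hbound k).1
          have : u k * (2*r - b * u k) ≤ u k * (2*r) := by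
            nlinarith [mul_nonneg (mul_nonneg hb0 h0) h0]
          calc u k * (2*r - b*u k) ≤ u k * (2*r) := this
            _ ≤ (2*r)^k * (2*r) := by nlinarith [pow_nonneg (by linarith : (0:ℝ) ≤ 2*r) k]
    refine squeeze_zero hnn key ?_
    exact tendsto_pow_atTop_nhds_zero_of_lt_one (by linarith) (by linarith)




open MeasureTheory

lemma measurable_cyl (σ : List (Fin 3)) : MeasurableSet (Cyl σ) := by
  have h : Cyl σ = ⋂ i : Fin σ.length, (fun x : ℕ → Fin 3 => x i) ⁻¹' {σ.get i} := by
    ext x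
    simp [Cyl, Set.mem_iInter]
  rw [h]
  exact MeasurableSet.iInter fun i =>
    (measurable_pi_apply (i : ℕ)) (MeasurableSet.singleton _)

def GoodSet (n k : ℕ) : Set (Fin n → (ℕ → Fin 3)) :=
  ⋃ T ∈ Finset.univ.filter (goodT (n := n) (k := k)),
    Set.univ.pi (fun i => Cyl (code (T i)))

lemma measurable_GoodSet (n k : ℕ) : MeasurableSet (GoodSet n k) := by
  refine MeasurableSet.biUnion (Finset.univ.filter _).countable_toSet (fun T _ => ?_)
  exact MeasurableSet.univ_pi (fun i => measurable_cyl _)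

lemma subset_GoodSet (n k : ℕ) :
    {x : Fin n → (ℕ → Fin 3) | (⋂ i, pathsOf (treeOf (x i))).Nonempty} ⊆ GoodSet n k := by
  intro x hx
  obtain ⟨y, hy⟩ := hx
  have hy' : ∀ i, y ∈ pathsOf (treeOf (x i)) := by
    intro i
    exact Set.mem_iInter.1 hy i
  have hTmem : (fun i => trunc (x i) k) ∈ Finset.univ.filter (goodT (n := n) (k := k)) := ?_
  refine Set.mem_biUnion hTmem ?_
  swap
  · rw [Finset.mem_filter]
    refine ⟨Finset.mem_univ _, ⟨fun j => y j, fun i => ?_⟩⟩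
    have hmem : (List.ofFn fun j : Fin k => y j) ∈ treeOf (x i) := hy' i k
    have hlen : (List.ofFn fun j : Fin k => y j).length = k := by simp
    have hmem2 : (List.ofFn fun j : Fin k => y j) ∈ (levels (x i) k).1 := by
      have := hmem
      rw [treeOf, Set.mem_setOf_eq, hlen] at this
      exact this
    have hrun := run (trunc (x i) k) (x i) (mem_cyl_trunc (x i) k) k le_rfl
    rw [hrun] at hmem2
    exact (mem_lvN_top (trunc (x i) k) _).1 hmem2
  · rw [Set.mem_univ_pi]
    intro i
    exact mem_cyl_trunc (x i) k

lemma measure_GoodSet (p : ℝ) (h0 : 0 ≤ p) (h2 : 2*p ≤ 1)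
    (μ : Measure (ℕ → Fin 3)) (hμ : IsBernoulliMeasure p p μ) (n k : ℕ) :
    Measure.pi (fun _ : Fin n => μ) (GoodSet n k) = ENNReal.ofReal (1 - Qd p n k) := by
  obtain ⟨hprob, hcyl⟩ := hμ
  haveI := hprob
  have hμcyl : ∀ {m} (t : PTk m), μ (Cyl (code t)) = ENNReal.ofReal (W p t) := by
    intro m t
    rw [show Cyl (code t) = {x | ∀ i : Fin (code t).length, x i = (code t).get i} from rfl,
        hcyl (code t), codeW]
  rw [GoodSet, measure_biUnion_finset ?hd ?hm]
  case hd =>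
    intro T hT T' hT' hne
    refine Set.disjoint_left.2 (fun x hxT hxT' => hne ?_)
    funext i
    rw [Set.mem_univ_pi] at hxT hxT'
    exact cyl_unique (T i) (T' i) (x i) (hxT i) (hxT' i)
  case hm =>
    intro T _
    exact MeasurableSet.univ_pi (fun i => measurable_cyl _)
  have hterm : ∀ T : Fin n → PTk k,
      Measure.pi (fun _ : Fin n => μ) (Set.univ.pi (fun i => Cyl (code (T i))))
        = ENNReal.ofReal (∏ i, W p (T i)) := by
    intro T
    rw [Measure.pi_pi]
    rw [ENNReal.ofReal_prod_of_nonneg (fun i _ => W_nonneg h0 h2 (T i))]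
    exact Finset.prod_congr rfl (fun i _ => hμcyl (T i))
  rw [Finset.sum_congr rfl (fun T _ => hterm T)]
  rw [← ENNReal.ofReal_sum_of_nonneg (fun T _ => Finset.prod_nonneg (fun i _ => W_nonneg h0 h2 (T i)))]
  congr 1
  rw [Finset.sum_filter]
  have hsplit : ∀ T : Fin n → PTk k,
      (if goodT T then (∏ i, W p (T i)) else 0)
        = (∏ i, W p (T i)) - (∏ i, W p (T i)) * (if goodT T then 0 else 1) := by
    intro T
    by_cases h : goodT T <;> simp [h]
  rw [Finset.sum_congr rfl (fun T _ => hsplit T), Finset.sum_sub_distrib]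
  rw [sum_tuple_prod (W p) n, sum_W, one_pow]
  rfl


open Filter

/-- For `n ≥ 2` and `1 - (1/2)^(1/n) ≤ p ≤ 1/2`, for `μ_p^{⊗n}`-almost every
tuple `(x₁, …, xₙ) ∈ (3^ω)ⁿ` the intersection `⋂ᵢ [T_{xᵢ}]` is empty. -/
theorem stmt0 (n : ℕ) (hn : 2 ≤ n) (p : ℝ)
    (hp1 : 1 - (1 / 2 : ℝ) ^ ((n : ℝ)⁻¹) ≤ p) (hp2 : p ≤ 1 / 2)
    (μ : Measure (ℕ → Fin 3)) (hμ : IsBernoulliMeasure p p μ) :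
    ∀ᵐ x : Fin n → (ℕ → Fin 3) ∂(Measure.pi fun _ : Fin n => μ),
      (⋂ i, pathsOf (treeOf (x i))) = ∅ := by
  have h2 : 2*p ≤ 1 := by linarith
  have hhalf : ((1:ℝ)/2) ^ ((n : ℝ)⁻¹) ≤ 1 :=
    Real.rpow_le_one (by norm_num) (by norm_num) (by positivity)
  have h0 : 0 ≤ p := by linarith
  have hn0 : (n:ℝ) ≠ 0 := Nat.cast_ne_zero.2 (by omega)
  -- the key quantities
  set r : ℝ := (1-p)^n with hrdef
  set b : ℝ := (1-2*p)^n with hbdef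
  have hx : (((1:ℝ)/2) ^ ((n : ℝ)⁻¹))^n = 1/2 := by
    rw [← Real.rpow_natCast (((1:ℝ)/2) ^ ((n : ℝ)⁻¹)) n,
        ← Real.rpow_mul (by norm_num : (0:ℝ) ≤ 1/2), inv_mul_cancel₀ hn0, Real.rpow_one]
  have hr : 2*r ≤ 1 := by
    have hle : (1-p)^n ≤ (((1:ℝ)/2) ^ ((n : ℝ)⁻¹))^n :=
      pow_le_pow_left₀ (by linarith) (by linarith) n
    rw [hx] at hle
    rw [hrdef]
    linarith
  have hb0 : 0 ≤ b := pow_nonneg (by linarith) n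
  have hbr : b ≤ r := pow_le_pow_left₀ (by linarith) (by linarith) n
  have hkey : 0 < b ∨ 2*r ≤ 1/2 := by
    rcases lt_or_eq_of_le hp2 with hlt | heq
    · left
      exact pow_pos (by linarith) n
    · right
      rw [hrdef, heq]
      have : ((1:ℝ) - 1/2)^n ≤ ((1:ℝ) - 1/2)^2 :=
        pow_le_pow_of_le_one (by norm_num) (by norm_num) hn
      norm_num at this ⊢
      linarith
  -- the survival probabilities
  set u : ℕ → ℝ := fun k => 1 - Qd p n k with hudef
  have hu0 : u 0 = 1 := by rw [hudef]; simp [Qd_zero]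
  have hurec : ∀ k, u (k+1) = u k * (2*r - b * u k) := by
    intro k
    rw [hudef]
    simp only
    rw [Qd_succ p n k, hrdef, hbdef]
    ring
  have htend := tendsto_u r b hb0 hbr hr hkey u hu0 hurec
  -- measure part
  obtain ⟨hprob, hcyl⟩ := hμ
  haveI := hprob
  rw [MeasureTheory.ae_iff]
  refine measure_mono_null (fun x hx2 => ?_) (?_ : (Measure.pi fun _ : Fin n => μ) (⋂ k, GoodSet n k) = 0)
  · simp only [Set.mem_setOf_eq] at hx2
    have hne : (⋂ i, pathsOf (treeOf (x i))).Nonempty := Set.nonempty_iff_ne_empty.2 hx2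
    exact Set.mem_iInter.2 (fun k => subset_GoodSet n k hne)
  · have hle : ∀ k, (Measure.pi fun _ : Fin n => μ) (⋂ k, GoodSet n k) ≤ ENNReal.ofReal (u k) := by
      intro k
      calc (Measure.pi fun _ : Fin n => μ) (⋂ k, GoodSet n k)
          ≤ (Measure.pi fun _ : Fin n => μ) (GoodSet n k) := measure_mono (Set.iInter_subset _ k)
        _ = ENNReal.ofReal (u k) := measure_GoodSet p h0 h2 μ ⟨hprob, hcyl⟩ n k
    have htend0 : Tendsto (fun k => ENNReal.ofReal (u k)) atTop (nhds 0) := by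
      have := ENNReal.tendsto_ofReal htend
      simpa using this
    have : (Measure.pi fun _ : Fin n => μ) (⋂ k, GoodSet n k) ≤ 0 := ge_of_tendsto' htend0 hle
    exact le_antisymm this zero_le
end

section
/- Let p, q, r, s ≥ 0 be reals with p + q ≤ 1, r + s ≤ 1, and p + q + r + s < 1 + pr + qs. Then (μ_{⟨p,q⟩} ⊗ μ_{⟨r,s⟩})({(x, y) ∈ 3^ω × 3^ω : [T_x] ∩ [T_y] = ∅}) = (ps + qr) / ((1 − p − q)(1 − r − s)). -/
open MeasureTheory

namespace S4
open Finset

def lv (x : ℕ → Fin 3) (n : ℕ) : List (List Bool) := (levels x n).1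
def con (x : ℕ → Fin 3) (n : ℕ) : ℕ := (levels x n).2

lemma lv_zero (x : ℕ → Fin 3) : lv x 0 = [[]] := rfl
lemma con_zero (x : ℕ → Fin 3) : con x 0 = 0 := rfl
lemma con_succ (x : ℕ → Fin 3) (n : ℕ) : con x (n+1) = con x n + (lv x n).length := rfl

lemma map_enum_eq_ofFn {α β : Type*} (l : List α) (g : α × ℕ → β) :
    l.zipIdx.map g = List.ofFn (fun i : Fin l.length => g (l.get i, i)) := by
  apply List.ext_get
  · simp
  · intro i h1 h2
    simp [List.getElem_zipIdx]

lemma lv_succ (x : ℕ → Fin 3) (n : ℕ) :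
    lv x (n+1) = (List.ofFn (fun i : Fin (lv x n).length =>
      children ((lv x n).get i) (x (con x n + i)))).flatten := by
  show ((lv x n).zipIdx.map fun q => children q.1 (x (con x n + q.2))).flatten = _
  rw [map_enum_eq_ofFn]

lemma mem_children {τ' τ : List Bool} {i : Fin 3} :
    τ' ∈ children τ i ↔ (τ' = τ ++ [false] ∧ i ≠ 1) ∨ (τ' = τ ++ [true] ∧ i ≠ 0) := by
  fin_cases i <;> simp [children]

lemma length_children (τ : List Bool) (i : Fin 3) : (children τ i).length ≤ 2 := by
  fin_cases i <;> simp [children]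

lemma length_of_mem_lv {x : ℕ → Fin 3} : ∀ n, ∀ σ ∈ lv x n, σ.length = n := by
  intro n
  induction n with
  | zero => intro σ hσ; simp [lv_zero] at hσ; simp [hσ]
  | succ n ih =>
    intro σ hσ
    rw [lv_succ] at hσ
    rw [List.mem_flatten] at hσ
    obtain ⟨l, hl, hσl⟩ := hσ
    rw [List.mem_ofFn] at hl
    obtain ⟨i, rfl⟩ := hl
    rcases mem_children.1 hσl with ⟨rfl, -⟩ | ⟨rfl, -⟩ <;>
      (simp; exact ih _ (List.getElem_mem i.2))

lemma nodup_children (τ : List Bool) (i : Fin 3) : (children τ i).Nodup := by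
  fin_cases i <;> simp [children]

lemma nodup_lv (x : ℕ → Fin 3) : ∀ n, (lv x n).Nodup := by
  intro n
  induction n with
  | zero => simp [lv_zero]
  | succ n ih =>
    rw [lv_succ, List.nodup_flatten]
    constructor
    · intro l hl
      rw [List.mem_ofFn] at hl
      obtain ⟨i, rfl⟩ := hl
      exact nodup_children _ _
    · rw [List.pairwise_ofFn]
      intro i j hij σ hσi hσj
      have hlen : ((lv x n).get i).length = ((lv x n).get j).length := by
        rw [length_of_mem_lv n _ (List.get_mem _ i), length_of_mem_lv n _ (List.get_mem _ j)]
      have hg : (lv x n).get i = (lv x n).get j := by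
        rcases mem_children.1 hσi with ⟨rfl, -⟩ | ⟨rfl, -⟩ <;>
          rcases mem_children.1 hσj with ⟨he, -⟩ | ⟨he, -⟩ <;>
          exact (List.append_inj he hlen).1
      exact Fin.ne_of_lt hij (List.nodup_iff_injective_get.1 ih hg)

lemma con_succ_lt {x : ℕ → Fin 3} {n : ℕ} {i : Fin (lv x n).length} :
    con x n + ↑i < con x (n+1) := by
  rw [con_succ]; omega

lemma levels_congr {x x' : ℕ → Fin 3} : ∀ n, (∀ i < con x n, x i = x' i) → levels x n = levels x' n := by
  intro n
  induction n with
  | zero => intro _; rfl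
  | succ n ih =>
    intro h
    have hc : con x n ≤ con x (n+1) := by rw [con_succ]; omega
    have hn : levels x n = levels x' n := ih (fun i hi => h i (lt_of_lt_of_le hi hc))
    have hlv : lv x n = lv x' n := congrArg Prod.fst hn
    have hcon : con x n = con x' n := congrArg Prod.snd hn
    show (_, _) = (_, _)
    rw [con_succ] at h
    congr 1
    · show ((lv x n).zipIdx.map fun q => children q.1 (x (con x n + q.2))).flatten
        = ((lv x' n).zipIdx.map fun q => children q.1 (x' (con x' n + q.2))).flatten
      rw [map_enum_eq_ofFn, map_enum_eq_ofFn]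
      congr 1
      apply List.ext_getElem
      · simp [hlv]
      · intro k h1 h2
        simp only [List.getElem_ofFn]
        show children ((lv x n).get _) (x (con x n + k)) = children ((lv x' n).get _) (x' (con x' n + k))
        simp only [List.length_ofFn] at h1 h2
        have hk : k < (lv x n).length := by simpa using h1
        have hg : (lv x n).get ⟨k, by simpa using h1⟩ = (lv x' n).get ⟨k, by simpa using h2⟩ := by
          congr 1
          · exact (Fin.heq_ext_iff (by rw [hlv])).2 rfl
        rw [← hg, ← hcon, ← h (con x n + k) (by omega)]
    · show con x n + (lv x n).length = con x' n + (lv x' n).length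
      rw [hlv, hcon]


lemma NL_le (x : ℕ → Fin 3) : ∀ n, (lv x n).length ≤ 2^n := by
  intro n; induction n with
  | zero => simp [lv_zero]
  | succ n ih =>
    rw [lv_succ, List.length_flatten, List.map_ofFn, List.sum_ofFn]
    calc ∑ i : Fin (lv x n).length, (children ((lv x n).get i) (x (con x n + i))).length
        ≤ ∑ _i : Fin (lv x n).length, 2 := Finset.sum_le_sum (fun i _ => length_children _ _)
      _ = 2 * (lv x n).length := by simp [Finset.sum_const, Finset.card_univ]; ring
      _ ≤ 2 * 2^n := by omega
      _ = 2^(n+1) := by ring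

lemma con_lt (x : ℕ → Fin 3) : ∀ n, con x n < 2^n := by
  intro n; induction n with
  | zero => simp [con_zero]
  | succ n ih =>
    have h1 := NL_le x n
    have h2 : (2:ℕ)^(n+1) = 2^n + 2^n := by ring
    rw [con_succ]; omega

def ext (u : List (Fin 3)) : ℕ → Fin 3 := fun i => u.getD i 0

lemma ext_eq_get {u : List (Fin 3)} {i : ℕ} (h : i < u.length) : ext u i = u.get ⟨i, h⟩ := by
  show u.getD i 0 = _
  rw [List.getD_eq_getElem _ _ h]
  rfl

def adm (n : ℕ) (u : List (Fin 3)) : Prop := u.length = con (ext u) n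

instance (n : ℕ) (u : List (Fin 3)) : Decidable (adm n u) := instDecidableEqNat _ _

def cylSet (u : List (Fin 3)) : Set (ℕ → Fin 3) := {x | ∀ i : Fin u.length, x i = u.get i}

lemma mem_cylSet_iff {u : List (Fin 3)} {x : ℕ → Fin 3} :
    x ∈ cylSet u ↔ ∀ i < u.length, x i = ext u i := by
  constructor
  · intro h i hi; rw [ext_eq_get hi]; exact h ⟨i, hi⟩
  · intro h i; rw [h i i.2, ext_eq_get i.2]

lemma measurableSet_cylSet (u : List (Fin 3)) : MeasurableSet (cylSet u) := by
  have : cylSet u = ⋂ i : Fin u.length, (fun x : ℕ → Fin 3 => x i) ⁻¹' {u.get i} := by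
    ext z; simp [cylSet]
  rw [this]
  exact MeasurableSet.iInter (fun i => (measurable_pi_apply _) (measurableSet_singleton _))

/-- locality: if `x` lies in the cylinder of an admissible `u`, levels agree. -/
lemma levels_ext_eq {n : ℕ} {u : List (Fin 3)} (hu : adm n u) {x : ℕ → Fin 3}
    (hx : x ∈ cylSet u) : levels x n = levels (ext u) n := by
  refine (levels_congr n ?_).symm
  intro i hi
  exact ((mem_cylSet_iff.1 hx) i (by rw [hu]; exact hi)).symm

lemma con_eq_of_mem {n : ℕ} {u : List (Fin 3)} (hu : adm n u) {x : ℕ → Fin 3}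
    (hx : x ∈ cylSet u) : con x n = u.length := by
  rw [hu]; exact congrArg Prod.snd (levels_ext_eq hu hx)

lemma adm_unique {n : ℕ} {u u' : List (Fin 3)} (hu : adm n u) (hu' : adm n u')
    {x : ℕ → Fin 3} (hx : x ∈ cylSet u) (hx' : x ∈ cylSet u') : u = u' := by
  have h1 : con x n = u.length := con_eq_of_mem hu hx
  have h2 : con x n = u'.length := con_eq_of_mem hu' hx'
  apply List.ext_getElem (by omega)
  intro i hi hi'
  have e1 : x i = u[i] := by rw [mem_cylSet_iff.1 hx i hi, ext_eq_get hi]; rfl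
  have e2 : x i = u'[i] := by rw [mem_cylSet_iff.1 hx' i hi', ext_eq_get hi']; rfl
  rw [← e1, ← e2]

lemma adm_prefix (x : ℕ → Fin 3) (n : ℕ) :
    adm n (List.ofFn (fun i : Fin (con x n) => x i)) ∧
      x ∈ cylSet (List.ofFn (fun i : Fin (con x n) => x i)) := by
  set u := List.ofFn (fun i : Fin (con x n) => x i) with hudef
  have hxu : x ∈ cylSet u := by
    intro i
    have hi : (i : ℕ) < con x n := by
      have := i.2; simpa [hudef] using this
    simp [hudef, List.get_ofFn]
  have hle : levels x n = levels (ext u) n := by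
    apply levels_congr
    intro i hi
    exact mem_cylSet_iff.1 hxu i (by simp [hudef, hi])
  constructor
  · show u.length = con (ext u) n
    have : con x n = con (ext u) n := congrArg Prod.snd hle
    rw [hudef, List.length_ofFn]; exact this
  · exact hxu

def listsLen (m : ℕ) : Finset (List (Fin 3)) :=
  Finset.univ.image (List.ofFn : (Fin m → Fin 3) → List (Fin 3))

lemma mem_listsLen {m : ℕ} {u : List (Fin 3)} : u ∈ listsLen m ↔ u.length = m := by
  constructor
  · intro h
    obtain ⟨g, -, rfl⟩ := Finset.mem_image.1 h
    simp
  · intro h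
    subst h
    exact Finset.mem_image.2 ⟨fun i => u.get i, Finset.mem_univ _, (List.ofFn_get u)⟩

lemma sum_listsLen {M : Type*} [AddCommMonoid M] (m : ℕ) (f : List (Fin 3) → M) :
    ∑ u ∈ listsLen m, f u = ∑ g : Fin m → Fin 3, f (List.ofFn g) := by
  rw [listsLen, Finset.sum_image (fun _ _ _ _ h => List.ofFn_injective h)]

def An (n : ℕ) : Finset (List (Fin 3)) :=
  (Finset.range (2^n)).biUnion (fun k => (listsLen k).filter (adm n))

lemma mem_An {n : ℕ} {u : List (Fin 3)} : u ∈ An n ↔ adm n u := by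
  constructor
  · intro h
    obtain ⟨k, -, hk⟩ := Finset.mem_biUnion.1 h
    exact (Finset.mem_filter.1 hk).2
  · intro h
    refine Finset.mem_biUnion.2 ⟨u.length, Finset.mem_range.2 ?_, Finset.mem_filter.2 ⟨mem_listsLen.2 rfl, h⟩⟩
    rw [h]; exact con_lt _ n


/-- number of common children produced by code symbols `a`, `b`. -/
def cc (a b : Fin 3) : ℕ :=
  if a = b then (if a = 2 then 2 else 1) else if a = 2 ∨ b = 2 then 1 else 0

lemma cc_eq (σ : List Bool) (a b : Fin 3) :
    (children σ a).countP (fun τ => τ ∈ children σ b) = cc a b := by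
  fin_cases a <;> fin_cases b <;>
    simp [children, cc, List.countP_cons]

/-- `List.indexOf` pinned to the `DecidableEq`-derived `BEq` instance used by Mathlib lemmas. -/
def iOf (σ : List Bool) (l : List (List Bool)) : ℕ :=
  @List.idxOf (List Bool) (instBEqOfDecidableEq) σ l

lemma iOf_lt_length {σ : List Bool} {l : List (List Bool)} (h : σ ∈ l) : iOf σ l < l.length :=
  (@List.idxOf_lt_length_iff _ instBEqOfDecidableEq _ _ _).2 h

lemma get_iOf {σ : List Bool} {l : List (List Bool)} (h : iOf σ l < l.length) :
    l.get ⟨iOf σ l, h⟩ = σ :=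
  @List.idxOf_get _ instBEqOfDecidableEq _ (a := σ) (l := l) h

lemma iOf_get {l : List (List Bool)} (H : l.Nodup) (i : Fin l.length) :
    iOf (l.get i) l = ↑i :=
  @List.get_idxOf _ instBEqOfDecidableEq _ (l := l) H i

/-- number of common nodes at level `n`. -/
def zc (x y : ℕ → Fin 3) (n : ℕ) : ℕ := (lv x n).countP (fun σ => σ ∈ lv y n)

lemma parent_mem {y : ℕ → Fin 3} {n : ℕ} {σ : List Bool} {b : Bool}
    (hlen : σ.length = n) (h : σ ++ [b] ∈ lv y (n+1)) : σ ∈ lv y n := by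
  rw [lv_succ, List.mem_flatten] at h
  obtain ⟨l, hl, hm⟩ := h
  rw [List.mem_ofFn] at hl
  obtain ⟨i, rfl⟩ := hl
  have hgl : ((lv y n).get i).length = n := length_of_mem_lv n _ (List.get_mem _ i)
  rcases mem_children.1 hm with ⟨he, -⟩ | ⟨he, -⟩ <;>
  · have : σ = (lv y n).get i := (List.append_inj he (by omega)).1
    rw [this]; exact List.get_mem _ i

lemma mem_lv_succ_iff {y : ℕ → Fin 3} {n : ℕ} {σ : List Bool} (hσ : σ ∈ lv y n) (b : Bool) :
    (σ ++ [b] ∈ lv y (n+1)) ↔ σ ++ [b] ∈ children σ (y (con y n + iOf σ (lv y n))) := by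
  have hσlen : σ.length = n := length_of_mem_lv n _ hσ
  constructor
  · intro h
    rw [lv_succ, List.mem_flatten] at h
    obtain ⟨l, hl, hm⟩ := h
    rw [List.mem_ofFn] at hl
    obtain ⟨i, rfl⟩ := hl
    have hgl : ((lv y n).get i).length = n := length_of_mem_lv n _ (List.get_mem _ i)
    have hgi : (lv y n).get i = σ := by
      rcases mem_children.1 hm with ⟨he, -⟩ | ⟨he, -⟩ <;>
        exact ((List.append_inj he (by omega)).1).symm
    have hidx : iOf σ (lv y n) = ↑i := by
      rw [← hgi]; exact iOf_get (nodup_lv y n) i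
    have hm' : σ ++ [b] ∈ children ((lv y n).get i) (y (con y n + ↑i)) := hm
    rw [hgi] at hm'
    rw [hidx]; exact hm'
  · intro h
    rw [lv_succ, List.mem_flatten]
    have hlt : iOf σ (lv y n) < (lv y n).length := iOf_lt_length hσ
    refine ⟨children ((lv y n).get ⟨_, hlt⟩) (y (con y n + iOf σ (lv y n))), ?_, ?_⟩
    · rw [List.mem_ofFn]
      exact ⟨⟨_, hlt⟩, rfl⟩
    · rw [show (lv y n).get ⟨_, hlt⟩ = σ from get_iOf hlt]
      exact h

lemma count_children_inter {x y : ℕ → Fin 3} {n : ℕ} {σ : List Bool} (hσx : σ ∈ lv x n)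
    (a : Fin 3) :
    (children σ a).countP (fun τ => τ ∈ lv y (n+1)) =
      if σ ∈ lv y n then cc a (y (con y n + iOf σ (lv y n))) else 0 := by
  have hσlen : σ.length = n := length_of_mem_lv n _ hσx
  by_cases h : σ ∈ lv y n
  · rw [if_pos h, ← cc_eq σ]
    apply List.countP_congr
    intro τ hτ
    have : ∃ b, τ = σ ++ [b] := by
      rcases mem_children.1 hτ with ⟨rfl, -⟩ | ⟨rfl, -⟩
      exacts [⟨false, rfl⟩, ⟨true, rfl⟩]
    obtain ⟨b, rfl⟩ := this
    simp only [decide_eq_true_eq]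
    exact mem_lv_succ_iff h b
  · rw [if_neg h]
    rw [List.countP_eq_zero]
    intro τ hτ
    have : ∃ b, τ = σ ++ [b] := by
      rcases mem_children.1 hτ with ⟨rfl, -⟩ | ⟨rfl, -⟩
      exacts [⟨false, rfl⟩, ⟨true, rfl⟩]
    obtain ⟨b, rfl⟩ := this
    simp only [decide_eq_true_eq]
    intro hmem
    exact h (parent_mem hσlen hmem)

lemma zc_succ (x y : ℕ → Fin 3) (n : ℕ) :
    zc x y (n+1) = ∑ i ∈ Finset.range (lv x n).length,
      (if (lv x n).getD i [] ∈ lv y n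
        then cc (x (con x n + i)) (y (con y n + iOf ((lv x n).getD i []) (lv y n))) else 0) := by
  have h1 : zc x y (n+1) = ∑ i : Fin (lv x n).length,
      (children ((lv x n).get i) (x (con x n + ↑i))).countP (fun σ => σ ∈ lv y (n+1)) := by
    rw [zc, lv_succ x n, List.countP_flatten, List.map_ofFn, List.sum_ofFn]; rfl
  rw [h1]
  have h2 : ∀ i : Fin (lv x n).length,
      (children ((lv x n).get i) (x (con x n + ↑i))).countP (fun σ => σ ∈ lv y (n+1))
        = (fun k : ℕ => (children ((lv x n).getD k []) (x (con x n + k))).countP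
            (fun σ => σ ∈ lv y (n+1))) ↑i := by
    intro i
    have hg : (lv x n).getD ↑i [] = (lv x n).get i := by
      rw [List.getD_eq_getElem _ _ i.2]; rfl
    simp only [hg]
  rw [Finset.sum_congr rfl (fun i _ => h2 i),
    Fin.sum_univ_eq_sum_range (fun k => (children ((lv x n).getD k []) (x (con x n + k))).countP
      (fun σ => σ ∈ lv y (n+1))) (lv x n).length]
  apply Finset.sum_congr rfl
  intro i hi
  have hi' : i < (lv x n).length := Finset.mem_range.1 hi
  have hD : (lv x n).getD i [] = (lv x n).get ⟨i, hi'⟩ := by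
    rw [List.getD_eq_getElem _ _ hi']; rfl
  rw [hD]
  exact count_children_inter (List.get_mem _ ⟨i, hi'⟩) _

lemma zc_mono_zero {x y : ℕ → Fin 3} {n : ℕ} (h : zc x y n = 0) : zc x y (n+1) = 0 := by
  rw [zc_succ]
  apply Finset.sum_eq_zero
  intro i hi
  have hi' : i < (lv x n).length := Finset.mem_range.1 hi
  rw [if_neg]
  intro hmem
  have hmem' : (lv x n)[i] ∈ lv y n := by rwa [List.getD_eq_getElem _ _ hi'] at hmem
  simp only [zc] at h
  have h0 := List.countP_eq_zero.1 h ((lv x n)[i]) (List.getElem_mem hi')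
  simp only [decide_eq_true_eq] at h0
  exact h0 hmem'


/-- totalization of a function on `Fin k`. -/
def fn {k : ℕ} (γ : Fin k → Fin 3) (j : ℕ) : Fin 3 := if h : j < k then γ ⟨j, h⟩ else 0

lemma fn_coe {k : ℕ} (γ : Fin k → Fin 3) (j : Fin k) : fn γ ↑j = γ j := by
  simp [fn, j.2]

def fpoly (p q r s t : ℝ) : ℝ :=
  (p*s + q*r) + (1 - (p*s+q*r) - (1-p-q)*(1-r-s)) * t + (1-p-q)*(1-r-s) * t^2

lemma sum_bern3 (p q : ℝ) : ∑ a : Fin 3, bern3 p q a = 1 := by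
  simp [Fin.sum_univ_three, bern3]

lemma onestep (p q r s t : ℝ) :
    ∑ a : Fin 3, bern3 p q a * (∑ b : Fin 3, bern3 r s b * t ^ cc a b) = fpoly p q r s t := by
  simp only [Fin.sum_univ_three, bern3, cc, fpoly]
  norm_num [Fin.ext_iff]
  ring

lemma prod_fn {m : ℕ} (g : ℕ → Fin 3 → ℝ) (γ : Fin m → Fin 3) :
    ∏ j : Fin m, g ↑j (γ j) = ∏ j ∈ Finset.range m, g j (fn γ j) := by
  rw [← Fin.prod_univ_eq_prod_range (fun j => g j (fn γ j)) m]
  exact Finset.prod_congr rfl (fun j _ => by rw [fn_coe])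

lemma sum_prod_fn {m : ℕ} (G : ℕ → Fin 3 → ℝ) :
    ∑ γ : Fin m → Fin 3, ∏ j ∈ Finset.range m, G j (fn γ j)
      = ∏ j ∈ Finset.range m, ∑ b : Fin 3, G j b := by
  have h1 : ∀ γ : Fin m → Fin 3, ∏ j ∈ Finset.range m, G j (fn γ j) = ∏ j : Fin m, G ↑j (γ j) :=
    fun γ => (prod_fn G γ).symm
  rw [Finset.sum_congr rfl (fun γ _ => h1 γ),
    ← Fin.prod_univ_eq_prod_range (fun j => ∑ b : Fin 3, G j b) m,
    Finset.prod_univ_sum (fun _ => (Finset.univ : Finset (Fin 3))), Fintype.piFinset_univ]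

lemma iOf_facts {Lx Ly : List (List Bool)} (hx : Lx.Nodup) {i : ℕ} (him : i < Lx.length)
    (hmem : Lx.getD i [] ∈ Ly) :
    iOf (Lx.getD i []) Ly < Ly.length ∧
    Ly.getD (iOf (Lx.getD i []) Ly) [] = Lx.getD i [] ∧
    Ly.getD (iOf (Lx.getD i []) Ly) [] ∈ Lx ∧
    iOf (Ly.getD (iOf (Lx.getD i []) Ly) []) Lx = i := by
  have h1 : iOf (Lx.getD i []) Ly < Ly.length := iOf_lt_length hmem
  have h2 : Ly.getD (iOf (Lx.getD i []) Ly) [] = Lx.getD i [] := by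
    rw [List.getD_eq_getElem _ _ h1]
    exact get_iOf h1
  have h3 : Ly.getD (iOf (Lx.getD i []) Ly) [] ∈ Lx := by
    rw [h2, List.getD_eq_getElem _ _ him]; exact List.getElem_mem him
  have h4 : iOf (Ly.getD (iOf (Lx.getD i []) Ly) []) Lx = i := by
    rw [h2]
    have hgd : Lx.getD i [] = Lx.get ⟨i, him⟩ := by rw [List.getD_eq_getElem _ _ him]; rfl
    rw [hgd]
    exact iOf_get hx ⟨i, him⟩
  exact ⟨h1, h2, h3, h4⟩

lemma countP_card (L : List (List Bool)) (Ly : List (List Bool)) :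
    L.countP (fun σ => σ ∈ Ly)
      = ((Finset.range L.length).filter (fun i => L.getD i [] ∈ Ly)).card := by
  induction L with
  | nil => simp
  | cons a L ih =>
    rw [List.countP_cons, Finset.card_filter, List.length_cons, Finset.sum_range_succ',
      ← Finset.card_filter]
    simp only [List.getD_cons_succ, List.getD_cons_zero]
    rw [← ih]
    simp only [decide_eq_true_eq]

lemma factor_core (p q r s t : ℝ) (m m' : ℕ) (P : ℕ → Prop) [DecidablePred P]
    (Q : ℕ → Prop) [DecidablePred Q] (jx jy : ℕ → ℕ)
    (hX : ∀ i, i < m → P i → (jx i < m' ∧ Q (jx i) ∧ jy (jx i) = i))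
    (hY : ∀ j, j < m' → Q j → (jy j < m ∧ P (jy j) ∧ jx (jy j) = j)) :
    ∑ α : Fin m → Fin 3, ∑ β : Fin m' → Fin 3,
      ((∏ i, bern3 p q (α i)) * (∏ j, bern3 r s (β j)) *
        ∏ i ∈ Finset.range m, t ^ (if P i then cc (fn α i) (fn β (jx i)) else 0))
      = fpoly p q r s t ^ ((Finset.range m).filter P).card := by
  have memX : ∀ i, i ∈ (Finset.range m).filter P ↔ (i < m ∧ P i) := by
    intro i; rw [Finset.mem_filter, Finset.mem_range]
  have memY : ∀ j, j ∈ (Finset.range m').filter Q ↔ (j < m' ∧ Q j) := by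
    intro j; rw [Finset.mem_filter, Finset.mem_range]
  have hβ : ∀ α : Fin m → Fin 3,
      ∑ β : Fin m' → Fin 3, (∏ j, bern3 r s (β j)) *
          ∏ i ∈ Finset.range m, t ^ (if P i then cc (fn α i) (fn β (jx i)) else 0)
        = ∏ i ∈ Finset.range m, (if P i
            then (∑ b : Fin 3, bern3 r s b * t ^ cc (fn α i) b) else 1) := by
    intro α
    have e1 : ∀ β : Fin m' → Fin 3,
        ∏ i ∈ Finset.range m, t ^ (if P i then cc (fn α i) (fn β (jx i)) else 0)
          = ∏ j ∈ (Finset.range m').filter Q, t ^ cc (fn α (jy j)) (fn β j) := by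
      intro β
      have l1 : ∏ i ∈ Finset.range m, t ^ (if P i then cc (fn α i) (fn β (jx i)) else 0)
          = ∏ i ∈ (Finset.range m).filter P, t ^ cc (fn α i) (fn β (jx i)) := by
        rw [Finset.prod_filter]
        apply Finset.prod_congr rfl
        intro i _
        split <;> simp
      rw [l1]
      apply Finset.prod_nbij jx
      · intro i hi
        obtain ⟨h1, h2⟩ := (memX i).1 hi
        obtain ⟨f1, f2, -⟩ := hX i h1 h2
        exact (memY _).2 ⟨f1, f2⟩
      · intro i1 h1 i2 h2 he
        rw [Finset.mem_coe] at h1 h2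
        obtain ⟨h11, h12⟩ := (memX i1).1 h1
        obtain ⟨h21, h22⟩ := (memX i2).1 h2
        have e1 := (hX i1 h11 h12).2.2
        have e2 := (hX i2 h21 h22).2.2
        rw [he, e2] at e1
        exact e1.symm
      · intro j hj
        rw [Finset.mem_coe] at hj
        obtain ⟨h1, h2⟩ := (memY j).1 hj
        obtain ⟨f1, f2, f3⟩ := hY j h1 h2
        refine ⟨jy j, ?_, f3⟩
        rw [Finset.mem_coe]
        exact (memX _).2 ⟨f1, f2⟩
      · intro i hi
        obtain ⟨h1, h2⟩ := (memX i).1 hi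
        rw [(hX i h1 h2).2.2]
    calc ∑ β : Fin m' → Fin 3, (∏ j, bern3 r s (β j)) *
          ∏ i ∈ Finset.range m, t ^ (if P i then cc (fn α i) (fn β (jx i)) else 0)
        = ∑ β : Fin m' → Fin 3, ∏ j ∈ Finset.range m',
            (bern3 r s (fn β j) * (if Q j then t ^ cc (fn α (jy j)) (fn β j) else 1)) := by
          apply Finset.sum_congr rfl
          intro β _
          rw [e1 β, prod_fn (fun _ b => bern3 r s b) β, Finset.prod_filter,
            ← Finset.prod_mul_distrib]
      _ = ∏ j ∈ Finset.range m', ∑ b : Fin 3,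
            (bern3 r s b * (if Q j then t ^ cc (fn α (jy j)) b else 1)) :=
          sum_prod_fn (fun j b => bern3 r s b * (if Q j then t ^ cc (fn α (jy j)) b else 1))
      _ = ∏ j ∈ Finset.range m', (if Q j
            then (∑ b : Fin 3, bern3 r s b * t ^ cc (fn α (jy j)) b) else 1) := by
          apply Finset.prod_congr rfl
          intro j _
          split
          · rfl
          · simp only [mul_one, sum_bern3]
      _ = ∏ j ∈ (Finset.range m').filter Q,
            (∑ b : Fin 3, bern3 r s b * t ^ cc (fn α (jy j)) b) := by
          rw [Finset.prod_filter]
      _ = ∏ i ∈ (Finset.range m).filter P,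
            (∑ b : Fin 3, bern3 r s b * t ^ cc (fn α i) b) := by
          apply Finset.prod_nbij jy
          · intro j hj
            obtain ⟨h1, h2⟩ := (memY j).1 hj
            obtain ⟨f1, f2, -⟩ := hY j h1 h2
            exact (memX _).2 ⟨f1, f2⟩
          · intro j1 h1 j2 h2 he
            rw [Finset.mem_coe] at h1 h2
            obtain ⟨h11, h12⟩ := (memY j1).1 h1
            obtain ⟨h21, h22⟩ := (memY j2).1 h2
            have e1 := (hY j1 h11 h12).2.2
            have e2 := (hY j2 h21 h22).2.2
            rw [he, e2] at e1
            exact e1.symm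
          · intro i hi
            rw [Finset.mem_coe] at hi
            obtain ⟨h1, h2⟩ := (memX i).1 hi
            obtain ⟨f1, f2, f3⟩ := hX i h1 h2
            refine ⟨jx i, ?_, f3⟩
            rw [Finset.mem_coe]
            exact (memY _).2 ⟨f1, f2⟩
          · intro j hj; rfl
      _ = ∏ i ∈ Finset.range m, (if P i
            then (∑ b : Fin 3, bern3 r s b * t ^ cc (fn α i) b) else 1) := by
          rw [Finset.prod_filter]
  calc ∑ α : Fin m → Fin 3, ∑ β : Fin m' → Fin 3,
        ((∏ i, bern3 p q (α i)) * (∏ j, bern3 r s (β j)) *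
          ∏ i ∈ Finset.range m, t ^ (if P i then cc (fn α i) (fn β (jx i)) else 0))
      = ∑ α : Fin m → Fin 3, (∏ i, bern3 p q (α i)) *
          ∑ β : Fin m' → Fin 3, ((∏ j, bern3 r s (β j)) *
            ∏ i ∈ Finset.range m, t ^ (if P i then cc (fn α i) (fn β (jx i)) else 0)) := by
        apply Finset.sum_congr rfl
        intro α _
        rw [Finset.mul_sum]
        apply Finset.sum_congr rfl
        intro β _
        ring
    _ = ∑ α : Fin m → Fin 3, ∏ i ∈ Finset.range m,
          (bern3 p q (fn α i) * (if P i
            then (∑ b : Fin 3, bern3 r s b * t ^ cc (fn α i) b) else 1)) := by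
        apply Finset.sum_congr rfl
        intro α _
        rw [hβ α, prod_fn (fun _ a => bern3 p q a) α, ← Finset.prod_mul_distrib]
    _ = ∏ i ∈ Finset.range m, ∑ a : Fin 3,
          (bern3 p q a * (if P i then (∑ b : Fin 3, bern3 r s b * t ^ cc a b) else 1)) :=
        sum_prod_fn (fun i a => bern3 p q a *
          (if P i then (∑ b : Fin 3, bern3 r s b * t ^ cc a b) else 1))
    _ = ∏ i ∈ Finset.range m, (if P i then fpoly p q r s t else 1) := by
        apply Finset.prod_congr rfl
        intro i _
        split
        · exact onestep p q r s t
        · simp only [mul_one, sum_bern3]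
    _ = ∏ i ∈ (Finset.range m).filter P, fpoly p q r s t := by rw [Finset.prod_filter]
    _ = fpoly p q r s t ^ ((Finset.range m).filter P).card := Finset.prod_const _

lemma factor (p q r s t : ℝ) (Lx Ly : List (List Bool)) (hx : Lx.Nodup) (hy : Ly.Nodup) :
    ∑ α : Fin Lx.length → Fin 3, ∑ β : Fin Ly.length → Fin 3,
      ((∏ i, bern3 p q (α i)) * (∏ j, bern3 r s (β j)) *
        ∏ i ∈ Finset.range Lx.length, t ^ (if Lx.getD i [] ∈ Ly
          then cc (fn α i) (fn β (iOf (Lx.getD i []) Ly)) else 0))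
      = fpoly p q r s t ^ (Lx.countP (fun σ => σ ∈ Ly)) := by
  rw [countP_card Lx Ly]
  apply factor_core p q r s t Lx.length Ly.length
    (fun i => Lx.getD i [] ∈ Ly) (fun j => Ly.getD j [] ∈ Lx)
    (fun i => iOf (Lx.getD i []) Ly) (fun j => iOf (Ly.getD j []) Lx)
  · intro i h1 h2
    obtain ⟨f1, f2, f3, f4⟩ := iOf_facts hx h1 h2
    exact ⟨f1, f3, f4⟩
  · intro j h1 h2
    obtain ⟨f1, f2, f3, f4⟩ := iOf_facts hy h1 h2
    exact ⟨f1, f3, f4⟩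


lemma ext_append_lt {u w : List (Fin 3)} {i : ℕ} (h : i < u.length) :
    ext (u ++ w) i = ext u i := by
  show (u ++ w).getD i 0 = u.getD i 0
  exact List.getD_append u w 0 i h

lemma ext_append_right (u w : List (Fin 3)) (i : ℕ) :
    ext (u ++ w) (u.length + i) = ext w i := by
  show (u ++ w).getD (u.length + i) 0 = w.getD i 0
  rw [List.getD_append_right u w 0 _ (by omega)]
  congr 1
  omega

lemma ext_mem_cylSet (u w : List (Fin 3)) : ext (u ++ w) ∈ cylSet u := by
  rw [mem_cylSet_iff]
  intro i hi
  exact ext_append_lt hi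

lemma getD_ofFn {m : ℕ} (α : Fin m → Fin 3) (i : ℕ) : (List.ofFn α).getD i 0 = fn α i := by
  rcases lt_or_ge i m with h | h
  · rw [List.getD_eq_getElem _ _ (by simpa using h)]
    simp [List.getElem_ofFn, fn, h]
  · rw [List.getD_eq_default _ _ (by simpa using h), fn, dif_neg (by omega)]

lemma adm_append {n : ℕ} {u α : List (Fin 3)} (hu : adm n u)
    (hα : α.length = (lv (ext u) n).length) :
    adm (n+1) (u ++ α) ∧ levels (ext (u ++ α)) n = levels (ext u) n := by
  have hlev : levels (ext (u ++ α)) n = levels (ext u) n :=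
    levels_ext_eq hu (ext_mem_cylSet u α)
  refine ⟨?_, hlev⟩
  show (u ++ α).length = con (ext (u ++ α)) (n+1)
  rw [con_succ]
  have h1 : con (ext (u ++ α)) n = con (ext u) n := congrArg Prod.snd hlev
  have h2 : lv (ext (u ++ α)) n = lv (ext u) n := congrArg Prod.fst hlev
  rw [h1, h2, List.length_append, hα, ← hu]

lemma An_succ (n : ℕ) : An (n+1) = (An n).biUnion
    (fun u => (listsLen ((lv (ext u) n).length)).image (fun α => u ++ α)) := by
  apply Finset.ext; intro w
  rw [mem_An, Finset.mem_biUnion]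
  constructor
  · intro hw
    have hlen : w.length = con (ext w) n + (lv (ext w) n).length := by
      rw [hw]; exact con_succ _ n
    set c := con (ext w) n with hc
    have hcle : c ≤ w.length := by omega
    set u := w.take c with hudef
    set α := w.drop c with hαdef
    have hul : u.length = c := by rw [hudef, List.length_take]; omega
    have hwua : w = u ++ α := (List.take_append_drop c w).symm
    have hagree : ∀ i < c, ext w i = ext u i := by
      intro i hi
      rw [hwua, ext_append_lt (by omega)]
    have hlev : levels (ext w) n = levels (ext u) n := levels_congr n (fun i hi => hagree i hi)
    have hconu : con (ext w) n = con (ext u) n := congrArg Prod.snd hlev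
    have hadmu : adm n u := by show u.length = con (ext u) n; rw [hul, hc, hconu]
    refine ⟨u, mem_An.2 hadmu, Finset.mem_image.2 ⟨α, ?_, hwua.symm⟩⟩
    rw [mem_listsLen]
    have h2 : lv (ext w) n = lv (ext u) n := congrArg Prod.fst hlev
    rw [hαdef, List.length_drop, ← h2]
    omega
  · rintro ⟨u, hu, hw⟩
    rw [Finset.mem_image] at hw
    obtain ⟨α, hα, rfl⟩ := hw
    exact (adm_append (mem_An.1 hu) (mem_listsLen.1 hα)).1

lemma An_succ_disj (n : ℕ) : (↑(An n) : Set (List (Fin 3))).PairwiseDisjoint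
    (fun u => (listsLen ((lv (ext u) n).length)).image (fun α => u ++ α)) := by
  intro u1 h1 u2 h2 hne
  simp only [Function.onFun]
  rw [Finset.disjoint_left]
  intro w hw1 hw2
  rw [Finset.mem_image] at hw1 hw2
  obtain ⟨α1, -, he1⟩ := hw1
  obtain ⟨α2, -, he2⟩ := hw2
  rw [Finset.mem_coe, mem_An] at h1 h2
  apply hne
  apply adm_unique h1 h2 (x := ext w)
  · rw [← he1]; exact ext_mem_cylSet _ _
  · rw [← he2]; exact ext_mem_cylSet _ _

def wt (p q : ℝ) (u : List (Fin 3)) : ℝ := (u.map (bern3 p q)).prod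

lemma wt_append (p q : ℝ) (u : List (Fin 3)) {m : ℕ} (α : Fin m → Fin 3) :
    wt p q (u ++ List.ofFn α) = wt p q u * ∏ i, bern3 p q (α i) := by
  rw [wt, List.map_append, List.prod_append, wt]
  congr 1
  rw [List.map_ofFn, List.prod_ofFn]
  rfl

def Gf (p q r s : ℝ) (n : ℕ) (t : ℝ) : ℝ :=
  ∑ u ∈ An n, ∑ v ∈ An n, wt p q u * wt r s v * t ^ zc (ext u) (ext v) n


lemma An_zero : An 0 = {[]} := by
  apply Finset.ext; intro u
  rw [mem_An, Finset.mem_singleton]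
  constructor
  · intro h
    exact List.length_eq_zero_iff.1 h
  · rintro rfl
    rfl

lemma zc_level_zero (x y : ℕ → Fin 3) : zc x y 0 = 1 := by
  show List.countP _ [[]] = 1
  rw [List.countP_cons]
  simp [lv_zero]

lemma Gf_zero (p q r s t : ℝ) : Gf p q r s 0 t = t := by
  simp [Gf, An_zero, zc_level_zero, wt]

lemma zc_append {n : ℕ} {u v : List (Fin 3)} (hu : adm n u) (hv : adm n v)
    (α : Fin (lv (ext u) n).length → Fin 3) (β : Fin (lv (ext v) n).length → Fin 3) :
    zc (ext (u ++ List.ofFn α)) (ext (v ++ List.ofFn β)) (n+1)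
      = ∑ i ∈ Finset.range (lv (ext u) n).length,
          (if (lv (ext u) n).getD i [] ∈ lv (ext v) n
            then cc (fn α i) (fn β (iOf ((lv (ext u) n).getD i []) (lv (ext v) n))) else 0) := by
  have hlx : levels (ext (u ++ List.ofFn α)) n = levels (ext u) n := (adm_append hu (by simp)).2
  have hly : levels (ext (v ++ List.ofFn β)) n = levels (ext v) n := (adm_append hv (by simp)).2
  have hlvx : lv (ext (u ++ List.ofFn α)) n = lv (ext u) n := congrArg Prod.fst hlx
  have hlvy : lv (ext (v ++ List.ofFn β)) n = lv (ext v) n := congrArg Prod.fst hly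
  have hconx : con (ext (u ++ List.ofFn α)) n = u.length := by
    rw [show con (ext (u ++ List.ofFn α)) n = con (ext u) n from congrArg Prod.snd hlx, ← hu]
  have hcony : con (ext (v ++ List.ofFn β)) n = v.length := by
    rw [show con (ext (v ++ List.ofFn β)) n = con (ext v) n from congrArg Prod.snd hly, ← hv]
  rw [zc_succ, hlvx, hlvy, hconx, hcony]
  apply Finset.sum_congr rfl
  intro i hi
  rw [Finset.mem_range] at hi
  by_cases hmem : (lv (ext u) n).getD i [] ∈ lv (ext v) n
  · rw [if_pos hmem, if_pos hmem]
    congr 1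
    · rw [ext_append_right u (List.ofFn α) i, show ext (List.ofFn α) i = (List.ofFn α).getD i 0 from rfl,
        getD_ofFn]
    · rw [ext_append_right v (List.ofFn β) _, show ext (List.ofFn β) _ = (List.ofFn β).getD _ 0 from rfl,
        getD_ofFn]
  · rw [if_neg hmem, if_neg hmem]

lemma inner_eval (p q r s t : ℝ) {n : ℕ} {u v : List (Fin 3)} (hu : adm n u) (hv : adm n v) :
    ∑ α : Fin (lv (ext u) n).length → Fin 3, ∑ β : Fin (lv (ext v) n).length → Fin 3,
        wt p q (u ++ List.ofFn α) * wt r s (v ++ List.ofFn β) *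
          t ^ zc (ext (u ++ List.ofFn α)) (ext (v ++ List.ofFn β)) (n+1)
      = wt p q u * wt r s v * fpoly p q r s t ^ zc (ext u) (ext v) n := by
  have key := factor p q r s t (lv (ext u) n) (lv (ext v) n) (nodup_lv _ n) (nodup_lv _ n)
  calc ∑ α : Fin (lv (ext u) n).length → Fin 3, ∑ β : Fin (lv (ext v) n).length → Fin 3,
        wt p q (u ++ List.ofFn α) * wt r s (v ++ List.ofFn β) *
          t ^ zc (ext (u ++ List.ofFn α)) (ext (v ++ List.ofFn β)) (n+1)
      = ∑ α : Fin (lv (ext u) n).length → Fin 3, ∑ β : Fin (lv (ext v) n).length → Fin 3,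
          (wt p q u * wt r s v) *
            ((∏ i, bern3 p q (α i)) * (∏ j, bern3 r s (β j)) *
              ∏ i ∈ Finset.range (lv (ext u) n).length,
                t ^ (if (lv (ext u) n).getD i [] ∈ lv (ext v) n
                  then cc (fn α i) (fn β (iOf ((lv (ext u) n).getD i []) (lv (ext v) n)))
                  else 0)) := by
        apply Finset.sum_congr rfl; intro α _
        apply Finset.sum_congr rfl; intro β _
        rw [wt_append, wt_append, zc_append hu hv α β, ← Finset.prod_pow_eq_pow_sum]
        ring
    _ = (wt p q u * wt r s v) *
          ∑ α : Fin (lv (ext u) n).length → Fin 3, ∑ β : Fin (lv (ext v) n).length → Fin 3,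
            ((∏ i, bern3 p q (α i)) * (∏ j, bern3 r s (β j)) *
              ∏ i ∈ Finset.range (lv (ext u) n).length,
                t ^ (if (lv (ext u) n).getD i [] ∈ lv (ext v) n
                  then cc (fn α i) (fn β (iOf ((lv (ext u) n).getD i []) (lv (ext v) n)))
                  else 0)) := by
        rw [Finset.mul_sum]
        apply Finset.sum_congr rfl; intro α _
        rw [Finset.mul_sum]
    _ = wt p q u * wt r s v * fpoly p q r s t ^ zc (ext u) (ext v) n := by
        rw [key]; rfl

lemma Gf_succ (p q r s t : ℝ) (n : ℕ) :
    Gf p q r s (n+1) t = Gf p q r s n (fpoly p q r s t) := by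
  rw [Gf, An_succ n, Finset.sum_biUnion (An_succ_disj n), Gf]
  apply Finset.sum_congr rfl
  intro u hu
  have hadmu := mem_An.1 hu
  rw [Finset.sum_image (fun a _ b _ h => List.append_cancel_left h), sum_listsLen]
  calc ∑ α : Fin (lv (ext u) n).length → Fin 3,
        ∑ w' ∈ (An n).biUnion (fun v => (listsLen ((lv (ext v) n).length)).image (fun β => v ++ β)),
          wt p q (u ++ List.ofFn α) * wt r s w' *
            t ^ zc (ext (u ++ List.ofFn α)) (ext w') (n+1)
      = ∑ α : Fin (lv (ext u) n).length → Fin 3, ∑ v ∈ An n,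
          ∑ β : Fin (lv (ext v) n).length → Fin 3,
            wt p q (u ++ List.ofFn α) * wt r s (v ++ List.ofFn β) *
              t ^ zc (ext (u ++ List.ofFn α)) (ext (v ++ List.ofFn β)) (n+1) := by
        apply Finset.sum_congr rfl
        intro α _
        rw [Finset.sum_biUnion (An_succ_disj n)]
        apply Finset.sum_congr rfl
        intro v hv
        rw [Finset.sum_image (fun a _ b _ h => List.append_cancel_left h), sum_listsLen]
    _ = ∑ v ∈ An n, ∑ α : Fin (lv (ext u) n).length → Fin 3,
          ∑ β : Fin (lv (ext v) n).length → Fin 3,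
            wt p q (u ++ List.ofFn α) * wt r s (v ++ List.ofFn β) *
              t ^ zc (ext (u ++ List.ofFn α)) (ext (v ++ List.ofFn β)) (n+1) := Finset.sum_comm
    _ = ∑ v ∈ An n, wt p q u * wt r s v * fpoly p q r s t ^ zc (ext u) (ext v) n := by
        apply Finset.sum_congr rfl
        intro v hv
        exact inner_eval p q r s t hadmu (mem_An.1 hv)

lemma Gf_eq_iterate (p q r s : ℝ) : ∀ n t, Gf p q r s n t = (fpoly p q r s)^[n] t := by
  intro n
  induction n with
  | zero => intro t; simp [Gf_zero]
  | succ n ih =>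
    intro t
    rw [Gf_succ, ih, Function.iterate_succ_apply]


lemma bern3_nonneg {p q : ℝ} (hp : 0 ≤ p) (hq : 0 ≤ q) (hpq : p + q ≤ 1) (a : Fin 3) :
    0 ≤ bern3 p q a := by
  fin_cases a <;> simp [bern3] <;> linarith

lemma wt_nonneg {p q : ℝ} (hp : 0 ≤ p) (hq : 0 ≤ q) (hpq : p + q ≤ 1) :
    ∀ u, 0 ≤ wt p q u := by
  intro u
  induction u with
  | nil => simp [wt]
  | cons a u ih =>
    rw [wt, List.map_cons, List.prod_cons]
    exact mul_nonneg (bern3_nonneg hp hq hpq a) ih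

lemma Gf_at_zero (p q r s : ℝ) (n : ℕ) :
    Gf p q r s n 0 = ∑ w ∈ ((An n ×ˢ An n).filter
        (fun w => zc (ext w.1) (ext w.2) n = 0)), wt p q w.1 * wt r s w.2 := by
  rw [Gf, ← Finset.sum_product', Finset.sum_filter]
  apply Finset.sum_congr rfl
  intro w _
  by_cases h : zc (ext w.1) (ext w.2) n = 0
  · rw [if_pos h, h, pow_zero, mul_one]
  · rw [if_neg h, zero_pow h, mul_zero]

lemma dead_eq (n : ℕ) :
    {xy : (ℕ → Fin 3) × (ℕ → Fin 3) | zc xy.1 xy.2 n = 0}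
      = ⋃ w ∈ ((An n ×ˢ An n).filter (fun w => zc (ext w.1) (ext w.2) n = 0)),
          cylSet w.1 ×ˢ cylSet w.2 := by
  ext ⟨x, y⟩
  simp only [Set.mem_setOf_eq, Set.mem_iUnion, Finset.mem_filter, Finset.mem_product,
    exists_prop, Set.mem_prod]
  constructor
  · intro h
    obtain ⟨hadmu, hxu⟩ := adm_prefix x n
    obtain ⟨hadmv, hyv⟩ := adm_prefix y n
    set u := List.ofFn (fun i : Fin (con x n) => x i) with hudef
    set v := List.ofFn (fun i : Fin (con y n) => y i) with hvdef
    have h1 : lv x n = lv (ext u) n := congrArg Prod.fst (levels_ext_eq hadmu hxu)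
    have h2 : lv y n = lv (ext v) n := congrArg Prod.fst (levels_ext_eq hadmv hyv)
    refine ⟨(u, v), ⟨⟨mem_An.2 hadmu, mem_An.2 hadmv⟩, ?_⟩, hxu, hyv⟩
    show zc (ext u) (ext v) n = 0
    simp only [zc, ← h1, ← h2]
    exact h
  · rintro ⟨⟨u, v⟩, ⟨⟨hu, hv⟩, hz⟩, hxu, hyv⟩
    have h1 : lv x n = lv (ext u) n := congrArg Prod.fst (levels_ext_eq (mem_An.1 hu) hxu)
    have h2 : lv y n = lv (ext v) n := congrArg Prod.fst (levels_ext_eq (mem_An.1 hv) hyv)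
    show zc x y n = 0
    simp only [zc, h1, h2]
    exact hz

lemma meas_dead {p q r s : ℝ} (hp : 0 ≤ p) (hq : 0 ≤ q) (hr : 0 ≤ r) (hs : 0 ≤ s)
    (hpq : p + q ≤ 1) (hrs : r + s ≤ 1) {μ ν : Measure (ℕ → Fin 3)}
    (hμ : IsBernoulliMeasure p q μ) (hν : IsBernoulliMeasure r s ν) (n : ℕ) :
    (μ.prod ν) {xy : (ℕ → Fin 3) × (ℕ → Fin 3) | zc xy.1 xy.2 n = 0}
      = ENNReal.ofReal (Gf p q r s n 0) := by
  haveI := hμ.1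
  haveI := hν.1
  have hdisj : (↑((An n ×ˢ An n).filter (fun w => zc (ext w.1) (ext w.2) n = 0))
      : Set (List (Fin 3) × List (Fin 3))).PairwiseDisjoint
      (fun w : List (Fin 3) × List (Fin 3) => cylSet w.1 ×ˢ cylSet w.2) := by
    intro w1 h1 w2 h2 hne
    simp only [Function.onFun]
    rw [Set.disjoint_left]
    rintro ⟨x, y⟩ hm1 hm2
    rw [Finset.mem_coe, Finset.mem_filter, Finset.mem_product] at h1 h2
    apply hne
    have hu := adm_unique (mem_An.1 h1.1.1) (mem_An.1 h2.1.1) hm1.1 hm2.1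
    have hv := adm_unique (mem_An.1 h1.1.2) (mem_An.1 h2.1.2) hm1.2 hm2.2
    exact Prod.ext hu hv
  have hmeas : ∀ w ∈ ((An n ×ˢ An n).filter (fun w => zc (ext w.1) (ext w.2) n = 0)),
      MeasurableSet (cylSet w.1 ×ˢ cylSet w.2) := by
    intro w _
    exact (measurableSet_cylSet w.1).prod (measurableSet_cylSet w.2)
  rw [dead_eq n, measure_biUnion_finset hdisj hmeas, Gf_at_zero,
    ENNReal.ofReal_sum_of_nonneg (fun w _ =>
      mul_nonneg (wt_nonneg hp hq hpq w.1) (wt_nonneg hr hs hrs w.2))]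
  apply Finset.sum_congr rfl
  intro w _
  rw [Measure.prod_prod, ENNReal.ofReal_mul (wt_nonneg hp hq hpq w.1)]
  congr 1
  · exact hμ.2 w.1
  · exact hν.2 w.2


def pre (z : ℕ → Bool) (n : ℕ) : List Bool := List.ofFn (fun i : Fin n => z i)

lemma pre_length (z : ℕ → Bool) (n : ℕ) : (pre z n).length = n := by simp [pre]

lemma mem_paths_iff {x : ℕ → Fin 3} {z : ℕ → Bool} :
    z ∈ pathsOf (treeOf x) ↔ ∀ n, pre z n ∈ lv x n := by
  constructor
  · intro h n
    have h2 := h n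
    simp only [treeOf, Set.mem_setOf_eq, List.length_ofFn] at h2
    exact h2
  · intro h n
    show (List.ofFn fun i : Fin n => z i) ∈ (levels x (List.ofFn fun i : Fin n => z i).length).1
    have hl : (List.ofFn fun i : Fin n => z i).length = n := by simp
    rw [hl]
    exact h n

lemma pre_succ (z : ℕ → Bool) (n : ℕ) : pre z (n+1) = pre z n ++ [z n] := by
  rw [pre, List.ofFn_succ', List.concat_eq_append]
  rfl

lemma pre_of_getD {σ : List Bool} {n : ℕ} (hlen : σ.length = n) :
    pre (fun i => σ.getD i false) n = σ := by
  apply List.ext_getElem (by simp [pre, hlen])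
  intro k h1 h2
  have hg : (pre (fun i => σ.getD i false) n)[k] = σ.getD k false := by
    simp only [pre, List.length_ofFn] at h1
    simp only [pre, List.getElem_ofFn]
  rw [hg, List.getD_eq_getElem σ false h2]

lemma target_eq :
    {xy : (ℕ → Fin 3) × (ℕ → Fin 3) | pathsOf (treeOf xy.1) ∩ pathsOf (treeOf xy.2) = ∅}
      = ⋃ n, {xy : (ℕ → Fin 3) × (ℕ → Fin 3) | zc xy.1 xy.2 n = 0} := by
  ext ⟨x, y⟩
  simp only [Set.mem_setOf_eq, Set.mem_iUnion]
  constructor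
  · intro h
    by_contra hc
    push_neg at hc
    set K : ℕ → Set (ℕ → Bool) :=
      fun n => {z | pre z n ∈ lv x n ∧ pre z n ∈ lv y n} with hK
    have hne : ∀ n, (K n).Nonempty := by
      intro n
      have hpos : 0 < (lv x n).countP (fun σ => σ ∈ lv y n) := Nat.pos_of_ne_zero (hc n)
      rw [List.countP_pos_iff] at hpos
      obtain ⟨σ, hσx, hσy⟩ := hpos
      simp only [decide_eq_true_eq] at hσy
      have hlen : σ.length = n := length_of_mem_lv n σ hσx
      have hpre := pre_of_getD hlen
      exact ⟨fun i => σ.getD i false, by rw [Set.mem_setOf_eq, hpre]; exact ⟨hσx, hσy⟩⟩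
    have hmono : ∀ n, K (n+1) ⊆ K n := by
      intro n z hz
      obtain ⟨h1, h2⟩ := hz
      rw [pre_succ] at h1 h2
      exact ⟨parent_mem (pre_length z n) h1, parent_mem (pre_length z n) h2⟩
    have hclosed : ∀ n, IsClosed (K n) := by
      intro n
      have hKn : K n = ⋃ σ ∈ {σ : List Bool | σ ∈ lv x n ∧ σ ∈ lv y n},
          {z : ℕ → Bool | ∀ i : Fin n, z i = σ.getD i false} := by
        ext z
        simp only [Set.mem_setOf_eq, Set.mem_iUnion, exists_prop]
        constructor
        · rintro ⟨h1, h2⟩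
          refine ⟨pre z n, ⟨h1, h2⟩, ?_⟩
          intro i
          rw [List.getD_eq_getElem _ _ (by rw [pre_length]; exact i.2)]
          simp [pre]
        · rintro ⟨σ, ⟨h1, h2⟩, hzσ⟩
          have hlen : σ.length = n := length_of_mem_lv n σ h1
          have : pre z n = σ := by
            apply List.ext_getElem (by simp [pre, hlen])
            intro k hk1 hk2
            have hk : k < n := by rwa [pre_length] at hk1
            have := hzσ ⟨k, hk⟩
            rw [List.getD_eq_getElem _ _ hk2] at this
            simpa [pre] using this
          show pre z n ∈ lv x n ∧ pre z n ∈ lv y n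
          rw [this]
          exact ⟨h1, h2⟩
      rw [hKn]
      apply Set.Finite.isClosed_biUnion
      · exact Set.Finite.subset (List.finite_toSet (lv x n)) (fun σ hσ => hσ.1)
      · intro σ _
        have : {z : ℕ → Bool | ∀ i : Fin n, z i = σ.getD i false}
            = ⋂ i : Fin n, (fun z : ℕ → Bool => z i) ⁻¹' {σ.getD i false} := by
          ext z; simp
        rw [this]
        exact isClosed_iInter (fun i =>
          IsClosed.preimage (continuous_apply _) isClosed_singleton)
    have hcompact : IsCompact (K 0) := (hclosed 0).isCompact
    obtain ⟨z, hz⟩ := IsCompact.nonempty_iInter_of_sequence_nonempty_isCompact_isClosed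
      K hmono hne hcompact hclosed
    rw [Set.mem_iInter] at hz
    have hzx : z ∈ pathsOf (treeOf x) := mem_paths_iff.2 (fun n => (hz n).1)
    have hzy : z ∈ pathsOf (treeOf y) := mem_paths_iff.2 (fun n => (hz n).2)
    rw [Set.eq_empty_iff_forall_notMem] at h
    exact h z ⟨hzx, hzy⟩
  · rintro ⟨n, hn⟩
    rw [Set.eq_empty_iff_forall_notMem]
    rintro z ⟨hzx, hzy⟩
    have h1 := mem_paths_iff.1 hzx n
    have h2 := mem_paths_iff.1 hzy n
    simp only [zc] at hn
    have h3 := List.countP_eq_zero.1 hn _ h1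
    simp only [decide_eq_true_eq] at h3
    exact h3 h2


section analysis
open Filter Topology

variable {p q r s : ℝ}

lemma key_facts (hp : 0 ≤ p) (hq : 0 ≤ q) (hr : 0 ≤ r) (hs : 0 ≤ s)
    (hpq : p + q ≤ 1) (hrs : r + s ≤ 1)
    (hkey : p + q + r + s < 1 + p * r + q * s) :
    0 ≤ p*s + q*r ∧ 0 < (1-p-q)*(1-r-s) ∧ p*s + q*r < (1-p-q)*(1-r-s) ∧
      0 ≤ 1 - (p*s+q*r) - (1-p-q)*(1-r-s) := by
  have ha : 0 ≤ p*s + q*r := by positivity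
  have hac : p*s + q*r < (1-p-q)*(1-r-s) := by nlinarith
  have hc : 0 < (1-p-q)*(1-r-s) := lt_of_le_of_lt ha hac
  have hb : 0 ≤ 1 - (p*s+q*r) - (1-p-q)*(1-r-s) := by nlinarith [mul_nonneg hp (by linarith : (0:ℝ) ≤ 1-r-s), mul_nonneg hs (by linarith : (0:ℝ) ≤ 1-p-q), mul_nonneg hq (by linarith : (0:ℝ) ≤ 1-r), mul_nonneg hr (by linarith : (0:ℝ) ≤ 1-q)]
  exact ⟨ha, hc, hac, hb⟩

lemma quad_iter_tendsto (a c : ℝ) (ha : 0 ≤ a) (hc : 0 < c) (hac : a < c)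
    (hb : 0 ≤ 1 - a - c) :
    Tendsto (fun n => (fun t => a + (1-a-c)*t + c*t^2)^[n] 0) atTop (𝓝 (a/c)) := by
  set F : ℝ → ℝ := fun t => a + (1-a-c)*t + c*t^2 with hFdef
  have hF : ∀ t, F t = a + (1-a-c)*t + c*t^2 := fun t => rfl
  have hL1 : a/c < 1 := by rw [div_lt_one hc]; exact hac
  have hL0 : 0 ≤ a/c := div_nonneg ha hc.le
  have hmonoF : ∀ t1 t2, 0 ≤ t1 → t1 ≤ t2 → F t1 ≤ F t2 := by
    intro t1 t2 h1 h12
    rw [hF, hF]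
    nlinarith [mul_nonneg hb (sub_nonneg.2 h12),
      mul_nonneg (mul_nonneg hc.le (add_nonneg h1 (h1.trans h12))) (sub_nonneg.2 h12)]
  have hfix : F (a/c) = a/c := by
    rw [hF]
    field_simp
    ring
  have hgrow : ∀ t, 0 ≤ t → t ≤ a/c → t ≤ F t := by
    intro t h0 hL
    rw [hF]
    have h1 : t ≤ 1 := le_trans hL (le_of_lt hL1)
    have h2 : c * t ≤ a := by
      rw [le_div_iff₀ hc] at hL
      linarith [hL]
    nlinarith [mul_nonneg (by linarith : (0:ℝ) ≤ 1 - t) (by linarith : (0:ℝ) ≤ a - c*t)]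
  have hseq : ∀ n, 0 ≤ F^[n] 0 ∧ F^[n] 0 ≤ a/c := by
    intro n
    induction n with
    | zero => simpa using hL0
    | succ n ih =>
      rw [Function.iterate_succ_apply']
      constructor
      · exact le_trans ih.1 (hgrow _ ih.1 ih.2)
      · calc F (F^[n] 0) ≤ F (a/c) := hmonoF _ _ ih.1 ih.2
          _ = a/c := hfix
  have hmonoseq : Monotone (fun n => F^[n] 0) := by
    apply monotone_nat_of_le_succ
    intro n
    rw [Function.iterate_succ_apply']
    exact hgrow _ (hseq n).1 (hseq n).2
  have hbdd : BddAbove (Set.range (fun n => F^[n] 0)) := by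
    refine ⟨a/c, ?_⟩
    rintro t ⟨n, rfl⟩
    exact (hseq n).2
  have hconv : Tendsto (fun n => F^[n] 0) atTop (𝓝 (⨆ n, F^[n] 0)) :=
    tendsto_atTop_ciSup hmonoseq hbdd
  have hMle : (⨆ n, F^[n] 0) ≤ a/c := ciSup_le (fun n => (hseq n).2)
  have hM0 : 0 ≤ (⨆ n, F^[n] 0) := le_ciSup_of_le hbdd 0 (by simp)
  have hcont : Continuous F := by
    rw [hFdef]
    exact (continuous_const.add (continuous_const.mul continuous_id)).add
      (continuous_const.mul (continuous_pow 2))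
  have hMfix : F (⨆ n, F^[n] 0) = (⨆ n, F^[n] 0) := by
    have h1 : Tendsto (fun n => F^[n+1] 0) atTop (𝓝 (⨆ n, F^[n] 0)) :=
      hconv.comp (tendsto_add_atTop_nat 1)
    have h2 : Tendsto (fun n => F (F^[n] 0)) atTop (𝓝 (F (⨆ n, F^[n] 0))) :=
      (hcont.tendsto _).comp hconv
    have h3 : (fun n => F^[n+1] 0) = (fun n => F (F^[n] 0)) := by
      funext n; rw [Function.iterate_succ_apply']
    rw [h3] at h1
    exact tendsto_nhds_unique h2 h1
  have hML : (⨆ n, F^[n] 0) = a/c := by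
    set M := ⨆ n, F^[n] 0
    have hfact : (1 - M) * (a - c*M) = 0 := by
      have h4 := hMfix
      rw [hF] at h4
      nlinarith [h4]
    have hM1 : M < 1 := lt_of_le_of_lt hMle hL1
    rcases mul_eq_zero.1 hfact with h | h
    · linarith
    · rw [eq_div_iff hc.ne']
      linarith
  rw [← hML]
  exact hconv

lemma iterate_tendsto (hp : 0 ≤ p) (hq : 0 ≤ q) (hr : 0 ≤ r) (hs : 0 ≤ s)
    (hpq : p + q ≤ 1) (hrs : r + s ≤ 1)
    (hkey : p + q + r + s < 1 + p * r + q * s) :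
    Tendsto (fun n => (fpoly p q r s)^[n] 0) atTop
      (𝓝 ((p*s + q*r) / ((1-p-q)*(1-r-s)))) := by
  obtain ⟨ha, hc, hac, hb⟩ := key_facts hp hq hr hs hpq hrs hkey
  have hfe : fpoly p q r s = (fun t => (p*s+q*r) + (1-(p*s+q*r)-(1-p-q)*(1-r-s))*t
      + (1-p-q)*(1-r-s)*t^2) := by
    funext t; rfl
  rw [hfe]
  exact quad_iter_tendsto _ _ ha hc hac hb

end analysis
end S4

/-- For `p,q,r,s ≥ 0` with `p+q ≤ 1`, `r+s ≤ 1`, and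
`p+q+r+s < 1 + pr + qs`, the `(μ_{⟨p,q⟩} ⊗ μ_{⟨r,s⟩})`-measure of the event
`[T_x] ∩ [T_y] = ∅` equals `(ps + qr) / ((1-p-q)(1-r-s))`. -/
theorem stmt4 (p q r s : ℝ) (hp : 0 ≤ p) (hq : 0 ≤ q) (hr : 0 ≤ r) (hs : 0 ≤ s)
    (hpq : p + q ≤ 1) (hrs : r + s ≤ 1)
    (hkey : p + q + r + s < 1 + p * r + q * s)
    (μ ν : Measure (ℕ → Fin 3))
    (hμ : IsBernoulliMeasure p q μ) (hν : IsBernoulliMeasure r s ν) :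
    (μ.prod ν) {xy : (ℕ → Fin 3) × (ℕ → Fin 3) |
        pathsOf (treeOf xy.1) ∩ pathsOf (treeOf xy.2) = ∅} =
      ENNReal.ofReal ((p * s + q * r) / ((1 - p - q) * (1 - r - s))) := by
  have hmono : Monotone (fun n => {xy : (ℕ → Fin 3) × (ℕ → Fin 3) | S4.zc xy.1 xy.2 n = 0}) := by
    apply monotone_nat_of_le_succ
    intro n xy hxy
    exact S4.zc_mono_zero hxy
  have ht := tendsto_measure_iUnion_atTop (μ := μ.prod ν) hmono
  have heq : ∀ n, (μ.prod ν) {xy : (ℕ → Fin 3) × (ℕ → Fin 3) | S4.zc xy.1 xy.2 n = 0}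
      = ENNReal.ofReal ((S4.fpoly p q r s)^[n] 0) := by
    intro n
    rw [S4.meas_dead hp hq hr hs hpq hrs hμ hν n, S4.Gf_eq_iterate]
  have ht2 : Filter.Tendsto (fun n => ENNReal.ofReal ((S4.fpoly p q r s)^[n] 0)) Filter.atTop
      (nhds ((μ.prod ν) (⋃ n, {xy : (ℕ → Fin 3) × (ℕ → Fin 3) | S4.zc xy.1 xy.2 n = 0}))) := by
    have hcomp : ((μ.prod ν) ∘ (fun n => {xy : (ℕ → Fin 3) × (ℕ → Fin 3) | S4.zc xy.1 xy.2 n = 0}))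
        = fun n => ENNReal.ofReal ((S4.fpoly p q r s)^[n] 0) := funext (fun n => heq n)
    rw [← hcomp]
    exact ht
  have ht3 : Filter.Tendsto (fun n => ENNReal.ofReal ((S4.fpoly p q r s)^[n] 0)) Filter.atTop
      (nhds (ENNReal.ofReal ((p * s + q * r) / ((1 - p - q) * (1 - r - s))))) :=
    (ENNReal.continuous_ofReal.tendsto _).comp
      (S4.iterate_tendsto hp hq hr hs hpq hrs hkey)
  rw [S4.target_eq]
  exact tendsto_nhds_unique ht2 ht3
end

section
/- Let β₀, β₁ ∈ (0,1) with β₀ + β₁ ≥ 1. Then P_{β₀,β₁}({ω ∈ Ω : Tree(ω) is infinite}) = (a₂ − a₃)/a₂ = (β₀ + β₁ − 1)/(β₀β₁). -/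
open MeasureTheory

/-- The Galton–Watson tree of `ω`: all binary strings all of whose nonempty prefixes survive. -/
def gwTree (ω : {σ : List Bool // σ ≠ []} → Bool) : Set (List Bool) :=
  {σ | ∀ τ : {σ : List Bool // σ ≠ []}, τ.val <+: σ → ω τ = true}

/-- The pruned tree: nodes of the Galton–Watson tree above which the tree is infinite
(has infinitely many extensions in the tree). -/
def gwPrune (ω : {σ : List Bool // σ ≠ []} → Bool) : Set (List Bool) :=
  {σ | σ ∈ gwTree ω ∧ {τ | σ <+: τ ∧ τ ∈ gwTree ω}.Infinite}

/-- Probability that coordinate `σ` takes value `b`: it is `1` (survives) with probability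
`β₀` if the last bit of `σ` is `0`, and `β₁` if the last bit of `σ` is `1`. -/
def gwP (β₀ β₁ : ℝ) (σ : {σ : List Bool // σ ≠ []}) (b : Bool) : ℝ :=
  if b then (if σ.val.getLast σ.prop = false then β₀ else β₁)
  else 1 - (if σ.val.getLast σ.prop = false then β₀ else β₁)

/-- `P` is the product measure `P_{β₀,β₁}`: a probability measure with independent coordinates,
coordinate `σ` equal to `1` with probability `β₀` or `β₁` according to the last bit of `σ`,
as expressed by its finite-dimensional distributions. -/
def IsGWMeasure (β₀ β₁ : ℝ) (P : Measure ({σ : List Bool // σ ≠ []} → Bool)) : Prop :=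
  IsProbabilityMeasure P ∧
    ∀ (S : Finset {σ : List Bool // σ ≠ []}) (f : {σ : List Bool // σ ≠ []} → Bool),
      P {ω | ∀ σ ∈ S, ω σ = f σ} = ENNReal.ofReal (∏ σ ∈ S, gwP β₀ β₁ σ (f σ))


namespace GWaux


abbrev I := {σ : List Bool // σ ≠ []}
abbrev Om := I → Bool

/-- cylinder set -/
def cyl (S : Finset I) (f : I → Bool) : Set Om := {ω | ∀ σ ∈ S, ω σ = f σ}

lemma measurableSet_coord (i : I) (c : Bool) : MeasurableSet {ω : Om | ω i = c} := by
  have : {ω : Om | ω i = c} = (fun ω : Om => ω i) ⁻¹' {c} := by ext ω; simp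
  rw [this]
  exact (measurable_pi_apply i) (measurableSet_singleton c)

lemma measurableSet_cyl (S : Finset I) (f : I → Bool) : MeasurableSet (cyl S f) := by
  have : cyl S f = ⋂ σ ∈ S, {ω : Om | ω σ = f σ} := by ext ω; simp [cyl]
  rw [this]
  exact MeasurableSet.biInter S.countable_toSet fun σ _ => measurableSet_coord σ (f σ)

/-- A depends only on coordinates in S -/
def DependsOn (A : Set Om) (S : Finset I) : Prop :=
  ∀ ω ω' : Om, (∀ σ ∈ S, ω σ = ω' σ) → ω ∈ A → ω' ∈ A

lemma DependsOn.mono {A : Set Om} {S S' : Finset I} (h : DependsOn A S) (hs : S ⊆ S') :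
    DependsOn A S' := fun ω ω' hag => h ω ω' (fun σ hσ => hag σ (hs hσ))

lemma DependsOn.inter {A B : Set Om} {S T : Finset I} (hA : DependsOn A S) (hB : DependsOn B T) :
    DependsOn (A ∩ B) (S ∪ T) := by
  intro ω ω' hag ⟨h1, h2⟩
  exact ⟨hA ω ω' (fun σ hσ => hag σ (Finset.mem_union_left _ hσ)) h1,
    hB ω ω' (fun σ hσ => hag σ (Finset.mem_union_right _ hσ)) h2⟩

lemma DependsOn.union {A B : Set Om} {S T : Finset I} (hA : DependsOn A S) (hB : DependsOn B T) :
    DependsOn (A ∪ B) (S ∪ T) := by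
  intro ω ω' hag h
  rcases h with h | h
  · exact Or.inl (hA ω ω' (fun σ hσ => hag σ (Finset.mem_union_left _ hσ)) h)
  · exact Or.inr (hB ω ω' (fun σ hσ => hag σ (Finset.mem_union_right _ hσ)) h)

lemma dependsOn_coord (i : I) (c : Bool) : DependsOn {ω : Om | ω i = c} {i} := by
  intro ω ω' hag h
  have := hag i (Finset.mem_singleton_self i)
  simp only [Set.mem_setOf_eq] at h ⊢
  rw [← this, h]

lemma dependsOn_cyl (S : Finset I) (f : I → Bool) : DependsOn (cyl S f) S := by
  intro ω ω' hag h σ hσ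
  rw [← hag σ hσ]; exact h σ hσ

/-- extend a function on S by false -/
def unres (S : Finset I) (g : {x // x ∈ S} → Bool) : I → Bool :=
  fun σ => if h : σ ∈ S then g ⟨σ, h⟩ else false

open scoped Classical in
noncomputable def good (A : Set Om) (S : Finset I) : Finset ({x // x ∈ S} → Bool) :=
  Finset.univ.filter (fun g => unres S g ∈ A)

lemma decomp {A : Set Om} {S : Finset I} (hA : DependsOn A S) :
    A = ⋃ g ∈ good A S, cyl S (unres S g) := by
  classical
  ext ω
  simp only [Set.mem_iUnion, good, Finset.mem_filter, Finset.mem_univ, true_and]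
  constructor
  · intro hω
    refine ⟨fun x => ω x.1, ?_, ?_⟩
    · exact hA ω _ (fun σ hσ => by simp [unres, hσ]) hω
    · intro σ hσ; simp [unres, hσ]
  · rintro ⟨g, hg, hcyl⟩
    exact hA (unres S g) ω (fun σ hσ => (hcyl σ hσ).symm) hg

lemma cyl_disjoint {S : Finset I} {g g' : {x // x ∈ S} → Bool} (h : g ≠ g') :
    Disjoint (cyl S (unres S g)) (cyl S (unres S g')) := by
  rw [Set.disjoint_left]
  intro ω h1 h2
  apply h
  funext x
  have e1 := h1 x.1 x.2
  have e2 := h2 x.1 x.2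
  simp only [unres, x.2, dif_pos, Subtype.coe_eta] at e1 e2
  rw [← e1, ← e2]

lemma DependsOn.measurableSet {A : Set Om} {S : Finset I} (hA : DependsOn A S) :
    MeasurableSet A := by
  rw [decomp hA]
  exact (good A S).measurableSet_biUnion (fun g _ => measurableSet_cyl S (unres S g))

end GWaux

namespace GWaux

variable {β₀ β₁ : ℝ}

/-- weight of a cylinder -/
noncomputable def wt (β₀ β₁ : ℝ) (S : Finset I) (f : I → Bool) : ℝ :=
  ∏ σ ∈ S, gwP β₀ β₁ σ (f σ)

lemma gwP_nonneg (h0 : β₀ ∈ Set.Ioo (0:ℝ) 1) (h1 : β₁ ∈ Set.Ioo (0:ℝ) 1) (σ : I) (c : Bool) :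
    0 ≤ gwP β₀ β₁ σ c := by
  obtain ⟨h00, h01⟩ := h0; obtain ⟨h10, h11⟩ := h1
  rcases c <;> by_cases h : σ.val.getLast σ.prop = false <;> simp [gwP, h] <;> linarith

lemma wt_nonneg (h0 : β₀ ∈ Set.Ioo (0:ℝ) 1) (h1 : β₁ ∈ Set.Ioo (0:ℝ) 1) (S : Finset I)
    (f : I → Bool) : 0 ≤ wt β₀ β₁ S f :=
  Finset.prod_nonneg fun σ _ => gwP_nonneg h0 h1 σ (f σ)

/-- hypothesis on measure: finite-dimensional distributions -/
def FDD (β₀ β₁ : ℝ) (Q : Measure Om) : Prop :=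
  ∀ (S : Finset I) (f : I → Bool),
      Q {ω | ∀ σ ∈ S, ω σ = f σ} = ENNReal.ofReal (∏ σ ∈ S, gwP β₀ β₁ σ (f σ))

lemma FDD.cyl {Q : Measure Om} (hQ : FDD β₀ β₁ Q) (S : Finset I) (f : I → Bool) :
    Q (cyl S f) = ENNReal.ofReal (wt β₀ β₁ S f) := hQ S f

lemma prob_depends {Q : Measure Om} (hQ : FDD β₀ β₁ Q) {A : Set Om} {S : Finset I}
    (hA : DependsOn A S) :
    Q A = ∑ g ∈ good A S, ENNReal.ofReal (wt β₀ β₁ S (unres S g)) := by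
  conv_lhs => rw [decomp hA]
  rw [measure_biUnion_finset ?_ (fun g _ => measurableSet_cyl S (unres S g))]
  · exact Finset.sum_congr rfl fun g _ => hQ.cyl S (unres S g)
  · intro g _ g' _ hgg'
    exact cyl_disjoint hgg'

lemma prob_single_inter {Q : Measure Om} (hQ : FDD β₀ β₁ Q)
    (h0 : β₀ ∈ Set.Ioo (0:ℝ) 1) (h1 : β₁ ∈ Set.Ioo (0:ℝ) 1)
    {B : Set Om} {T : Finset I} (hB : DependsOn B T) {i : I} (hi : i ∉ T) (c : Bool) :
    Q ({ω | ω i = c} ∩ B) = ENNReal.ofReal (gwP β₀ β₁ i c) * Q B := by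
  classical
  have hkey : ∀ f : I → Bool,
      {ω : Om | ω i = c} ∩ cyl T f = cyl (insert i T) (Function.update f i c) := by
    intro f
    ext ω
    simp only [Set.mem_inter_iff, Set.mem_setOf_eq, cyl, Finset.mem_insert]
    constructor
    · rintro ⟨hc, hcy⟩ σ hσ
      rcases hσ with rfl | hσ
      · simpa using hc
      · have : σ ≠ i := fun h => hi (h ▸ hσ)
        rw [Function.update_of_ne this]; exact hcy σ hσ
    · intro h
      constructor
      · have := h i (Or.inl rfl); simpa using this
      · intro σ hσ
        have : σ ≠ i := fun h => hi (h ▸ hσ)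
        have h2 := h σ (Or.inr hσ); rwa [Function.update_of_ne this] at h2
  have hsplit : {ω : Om | ω i = c} ∩ B
      = ⋃ g ∈ good B T, cyl (insert i T) (Function.update (unres T g) i c) := by
    conv_lhs => rw [decomp hB]
    rw [Set.inter_iUnion₂]
    exact Set.iUnion₂_congr fun g _ => hkey (unres T g)
  rw [hsplit, measure_biUnion_finset ?_ (fun g _ => measurableSet_cyl _ _)]
  · rw [prob_depends hQ hB, Finset.mul_sum]
    refine Finset.sum_congr rfl fun g _ => ?_
    rw [hQ.cyl]
    have hw : wt β₀ β₁ (insert i T) (Function.update (unres T g) i c)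
        = gwP β₀ β₁ i c * wt β₀ β₁ T (unres T g) := by
      unfold wt
      rw [Finset.prod_insert hi, Function.update_self]
      congr 1
      refine Finset.prod_congr rfl fun σ hσ => ?_
      have : σ ≠ i := fun h => hi (h ▸ hσ)
      rw [Function.update_of_ne this]
    rw [hw, ENNReal.ofReal_mul (gwP_nonneg h0 h1 i c)]
  · have hsub : ∀ g : {x // x ∈ T} → Bool,
        cyl (insert i T) (Function.update (unres T g) i c) ⊆ cyl T (unres T g) := by
      intro g ω h σ hσ
      have hne : σ ≠ i := fun h' => hi (h' ▸ hσ)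
      have h2 := h σ (Finset.mem_insert_of_mem hσ)
      rwa [Function.update_of_ne hne] at h2
    intro g _ g' _ hgg'
    exact Disjoint.mono (hsub g) (hsub g') (cyl_disjoint hgg')

lemma prob_cyl_inter {Q : Measure Om} (hQ : FDD β₀ β₁ Q)
    (h0 : β₀ ∈ Set.Ioo (0:ℝ) 1) (h1 : β₁ ∈ Set.Ioo (0:ℝ) 1)
    {B : Set Om} {T : Finset I} (hB : DependsOn B T) (S : Finset I) (hST : Disjoint S T)
    (f : I → Bool) :
    Q (cyl S f ∩ B) = ENNReal.ofReal (wt β₀ β₁ S f) * Q B := by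
  classical
  induction S using Finset.induction_on with
  | empty =>
      have : cyl ∅ f = Set.univ := by ext ω; simp [cyl]
      simp [this, wt]
  | @insert i S hiS ih =>
      have hST' : Disjoint S T := by
        exact Disjoint.mono_left (Finset.subset_insert i S) hST
      have hiT : i ∉ T := by
        intro h
        exact (Finset.disjoint_left.mp hST (Finset.mem_insert_self i S)) h
      have hcylsplit : cyl (insert i S) f = {ω : Om | ω i = f i} ∩ cyl S f := by
        ext ω; simp [cyl, Finset.forall_mem_insert]
      rw [hcylsplit, Set.inter_assoc,
        prob_single_inter hQ h0 h1 ((dependsOn_cyl S f).inter hB) ?_ (f i),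
        ih hST']
      · rw [← mul_assoc, ← ENNReal.ofReal_mul (gwP_nonneg h0 h1 i (f i))]
        congr 2
        unfold wt
        rw [Finset.prod_insert hiS]
      · simp only [Finset.mem_union, not_or]
        exact ⟨hiS, hiT⟩

lemma prob_inter {Q : Measure Om} (hQ : FDD β₀ β₁ Q)
    (h0 : β₀ ∈ Set.Ioo (0:ℝ) 1) (h1 : β₁ ∈ Set.Ioo (0:ℝ) 1)
    {A B : Set Om} {S T : Finset I} (hA : DependsOn A S) (hB : DependsOn B T)
    (hST : Disjoint S T) :
    Q (A ∩ B) = Q A * Q B := by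
  classical
  have hsplit : A ∩ B = ⋃ g ∈ good A S, (cyl S (unres S g) ∩ B) := by
    conv_lhs => rw [decomp hA]
    rw [Set.iUnion₂_inter]
  rw [hsplit, measure_biUnion_finset ?_
      (fun g _ => (measurableSet_cyl _ _).inter hB.measurableSet)]
  · rw [prob_depends hQ hA, Finset.sum_mul]
    exact Finset.sum_congr rfl fun g _ => prob_cyl_inter hQ h0 h1 hB S hST (unres S g)
  · intro g _ g' _ hgg'
    exact Disjoint.mono Set.inter_subset_left Set.inter_subset_left (cyl_disjoint hgg')

end GWaux

namespace GWaux

variable {β₀ β₁ : ℝ}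

def eb (b : Bool) : I → I := fun σ => ⟨b :: σ.1, List.cons_ne_nil b σ.1⟩

lemma eb_injective (b : Bool) : Function.Injective (eb b) := by
  intro σ τ h
  apply Subtype.ext
  have := congrArg Subtype.val h
  simpa [eb] using this

def ib (b : Bool) : I := ⟨[b], by simp⟩

def Tb (b : Bool) : Om → Om := fun ω σ => ω (eb b σ)

lemma measurable_Tb (b : Bool) : Measurable (Tb b) :=
  measurable_pi_lambda _ fun σ => measurable_pi_apply _

lemma gwP_eb (b : Bool) (σ : I) (c : Bool) : gwP β₀ β₁ (eb b σ) c = gwP β₀ β₁ σ c := by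
  have : (eb b σ).val.getLast (eb b σ).prop = σ.val.getLast σ.prop := by
    simp only [eb]
    exact List.getLast_cons σ.prop
  simp only [gwP, this]

/-- pushforward of an FDD measure under the shift is FDD -/
lemma FDD.map {Q : Measure Om} (hQ : FDD β₀ β₁ Q) (b : Bool) :
    FDD β₀ β₁ (Measure.map (Tb b) Q) := by
  classical
  intro S f
  have hms : MeasurableSet {ω : Om | ∀ σ ∈ S, ω σ = f σ} := measurableSet_cyl S f
  rw [Measure.map_apply (measurable_Tb b) hms]
  set f' : I → Bool := fun τ => if h : τ.1.tail = [] then false else f ⟨τ.1.tail, h⟩ with hf'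
  have hf'e : ∀ σ : I, f' (eb b σ) = f σ := by
    intro σ
    simp only [hf', eb, List.tail_cons]
    simp [σ.prop]
  have hpre : Tb b ⁻¹' {ω : Om | ∀ σ ∈ S, ω σ = f σ}
      = {ω : Om | ∀ τ ∈ S.image (eb b), ω τ = f' τ} := by
    ext ω
    simp only [Set.mem_preimage, Set.mem_setOf_eq, Finset.mem_image]
    constructor
    · rintro h τ ⟨σ, hσ, rfl⟩
      rw [hf'e σ]
      exact h σ hσ
    · intro h σ hσ
      have := h (eb b σ) ⟨σ, hσ, rfl⟩
      rwa [hf'e σ] at this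
  rw [hpre, hQ (S.image (eb b)) f']
  congr 1
  rw [Finset.prod_image (fun σ _ τ _ h => eb_injective b h)]
  exact Finset.prod_congr rfl fun σ _ => by rw [hf'e σ, gwP_eb]

/-- the extinction-by-level-n event -/
def K (n : ℕ) : Set Om := {ω | ∀ σ : List Bool, σ.length = n → σ ∉ gwTree ω}

lemma nil_mem_gwTree (ω : Om) : [] ∈ gwTree ω := by
  intro τ hτ
  exact absurd (List.prefix_nil.mp hτ) τ.prop

lemma K_zero : K 0 = ∅ := by
  ext ω
  simp only [K, Set.mem_setOf_eq, Set.mem_empty_iff_false, iff_false, not_forall]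
  exact ⟨[], by simp, fun h => h (nil_mem_gwTree ω)⟩

lemma gwTree_prefix_closed {ω : Om} {σ τ : List Bool} (h : τ <+: σ) (hσ : σ ∈ gwTree ω) :
    τ ∈ gwTree ω := fun ρ hρ => hσ ρ (hρ.trans h)

lemma cons_mem_gwTree (b : Bool) (τ : List Bool) (ω : Om) :
    (b :: τ) ∈ gwTree ω ↔ ω (ib b) = true ∧ τ ∈ gwTree (Tb b ω) := by
  constructor
  · intro h
    refine ⟨h (ib b) ⟨τ, rfl⟩, fun ρ hρ => ?_⟩
    exact h (eb b ρ) (by obtain ⟨t, ht⟩ := hρ; exact ⟨t, by simp [eb, ht]⟩)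
  · rintro ⟨hb, ht⟩ ρ hρ
    obtain ⟨a, l, hl⟩ : ∃ a l, ρ.1 = a :: l := by
      rcases hρl : ρ.1 with _ | ⟨a, l⟩
      · exact absurd hρl ρ.prop
      · exact ⟨a, l, rfl⟩
    rw [hl] at hρ
    obtain ⟨heq, hpre⟩ := List.cons_prefix_cons.mp hρ
    rw [heq] at hl
    rcases l with _ | ⟨c, l'⟩
    · have : ρ = ib b := Subtype.ext hl
      rw [this]; exact hb
    · have : ρ = eb b ⟨c :: l', by simp⟩ := Subtype.ext (by simp [eb, hl])
      rw [this]
      exact ht ⟨c :: l', by simp⟩ hpre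

/-- the component event for child b -/
def Fb (b : Bool) (n : ℕ) : Set Om := {ω | ω (ib b) = false} ∪ (Tb b) ⁻¹' (K n)

lemma K_succ (n : ℕ) : K (n + 1) = Fb false n ∩ Fb true n := by
  have key : ∀ ω : Om, ω ∈ K (n+1) ↔ ∀ b, ω ∈ Fb b n := by
    intro ω
    constructor
    · intro h b
      by_cases hb : ω (ib b) = false
      · exact Or.inl hb
      · refine Or.inr fun τ hτ hmem => ?_
        have hbt : ω (ib b) = true := by
          cases hc : ω (ib b)
          · exact absurd hc hb
          · rfl
        exact h (b :: τ) (by simp [hτ]) ((cons_mem_gwTree b τ ω).mpr ⟨hbt, hmem⟩)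
    · intro h σ hσ hmem
      rcases σ with _ | ⟨b, τ⟩
      · simp at hσ
      · obtain ⟨hb, ht⟩ := (cons_mem_gwTree b τ ω).mp hmem
        rcases h b with hc | hc
        · simp only [Set.mem_setOf_eq] at hc
          rw [hb] at hc; exact absurd hc (by simp)
        · exact hc τ (by simpa using hσ) ht
  ext ω
  rw [key ω]
  simp only [Set.mem_inter_iff]
  constructor
  · intro h; exact ⟨h false, h true⟩
  · rintro ⟨h1, h2⟩ b; cases b; exacts [h1, h2]

/-- finset of nonempty strings of length ≤ n -/
noncomputable def Sn (n : ℕ) : Finset I :=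
  Set.Finite.toFinset (show {σ : I | σ.1.length ≤ n}.Finite from
    Set.Finite.preimage (Set.injOn_of_injective Subtype.val_injective)
      (List.finite_length_le Bool n))

lemma mem_Sn {n : ℕ} {σ : I} : σ ∈ Sn n ↔ σ.1.length ≤ n := by
  simp [Sn]

lemma dependsOn_K (n : ℕ) : DependsOn (K n) (Sn n) := by
  intro ω ω' hag hω σ hσ hmem
  refine hω σ hσ ?_
  intro τ hτ
  have hlen : τ.1.length ≤ n := by
    have := hτ.length_le
    omega
  rw [hag τ (mem_Sn.mpr hlen)]
  exact hmem τ hτ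

lemma dependsOn_preimage {A : Set Om} {S : Finset I} (hA : DependsOn A S) (b : Bool) :
    DependsOn ((Tb b) ⁻¹' A) (S.image (eb b)) := by
  intro ω ω' hag h
  refine hA (Tb b ω) (Tb b ω') ?_ h
  intro σ hσ
  exact hag (eb b σ) (Finset.mem_image_of_mem _ hσ)

/-- dependence set of Fb -/
noncomputable def Db (b : Bool) (n : ℕ) : Finset I := insert (ib b) ((Sn n).image (eb b))

lemma head_of_mem_Db {b : Bool} {n : ℕ} {σ : I} (h : σ ∈ Db b n) : σ.1.head? = some b := by
  rcases Finset.mem_insert.mp h with rfl | h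
  · rfl
  · obtain ⟨τ, _, rfl⟩ := Finset.mem_image.mp h
    rfl

lemma disjoint_Db (n : ℕ) : Disjoint (Db false n) (Db true n) := by
  rw [Finset.disjoint_left]
  intro σ h1 h2
  have e1 := head_of_mem_Db h1
  have e2 := head_of_mem_Db h2
  rw [e1] at e2
  simpa using e2

lemma ib_not_mem_image (b : Bool) (n : ℕ) : ib b ∉ (Sn n).image (eb b) := by
  intro h
  obtain ⟨τ, _, hτ⟩ := Finset.mem_image.mp h
  have := congrArg (fun σ : I => σ.1.length) hτ
  simp only [eb, ib, List.length_cons, List.length_singleton] at this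
  have := τ.prop
  cases hτl : τ.1 with
  | nil => exact this hτl
  | cons a l => rw [hτl] at *; simp_all

lemma dependsOn_Fb (b : Bool) (n : ℕ) : DependsOn (Fb b n) (Db b n) := by
  have h1 : DependsOn {ω : Om | ω (ib b) = false} {ib b} := dependsOn_coord (ib b) false
  have h2 := dependsOn_preimage (dependsOn_K n) b
  have := h1.union h2
  refine this.mono ?_
  intro σ hσ
  rcases Finset.mem_union.mp hσ with h | h
  · rw [Finset.mem_singleton.mp h]; exact Finset.mem_insert_self _ _
  · exact Finset.mem_insert_of_mem h

end GWaux

namespace GWaux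

variable {β₀ β₁ : ℝ}

/-- extinction probability sequence -/
noncomputable def q (β₀ β₁ : ℝ) : ℕ → ℝ
  | 0 => 0
  | n + 1 => (1 - β₀ + β₀ * q β₀ β₁ n) * (1 - β₁ + β₁ * q β₀ β₁ n)

lemma gwP_ib (b c : Bool) :
    gwP β₀ β₁ (ib b) c
      = if c then (bif b then β₁ else β₀) else 1 - (bif b then β₁ else β₀) := by
  have : (ib b).val.getLast (ib b).prop = b := rfl
  cases b <;> simp [gwP, this]

lemma Fb_prob (h0 : β₀ ∈ Set.Ioo (0:ℝ) 1) (h1 : β₁ ∈ Set.Ioo (0:ℝ) 1)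
    {Q : Measure Om} (hQ : FDD β₀ β₁ Q) (n : ℕ) (b : Bool)
    (IH : ∀ Q' : Measure Om, FDD β₀ β₁ Q' → Q' (K n) = ENNReal.ofReal (q β₀ β₁ n))
    (hq0 : 0 ≤ q β₀ β₁ n) (hq1 : q β₀ β₁ n ≤ 1) :
    Q (Fb b n) =
      ENNReal.ofReal (1 - (bif b then β₁ else β₀) + (bif b then β₁ else β₀) * q β₀ β₁ n) := by
  set βb : ℝ := bif b then β₁ else β₀ with hβb
  have hβb0 : 0 ≤ βb := by cases b <;> simp [hβb] <;> [exact h0.1.le; exact h1.1.le]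
  have hβb1 : βb ≤ 1 := by cases b <;> simp [hβb] <;> [exact h0.2.le; exact h1.2.le]
  have hsplit : Fb b n = {ω : Om | ω (ib b) = false}
      ∪ ({ω : Om | ω (ib b) = true} ∩ (Tb b) ⁻¹' (K n)) := by
    ext ω
    simp only [Fb, Set.mem_union, Set.mem_inter_iff, Set.mem_setOf_eq, Set.mem_preimage]
    cases hc : ω (ib b) <;> simp [hc]
  have hBdep := dependsOn_preimage (dependsOn_K n) b
  have hmeas1 : MeasurableSet ({ω : Om | ω (ib b) = true} ∩ (Tb b) ⁻¹' (K n)) :=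
    (measurableSet_coord _ _).inter ((measurable_Tb b) (dependsOn_K n).measurableSet)
  have hdisj : Disjoint {ω : Om | ω (ib b) = false}
      ({ω : Om | ω (ib b) = true} ∩ (Tb b) ⁻¹' (K n)) := by
    rw [Set.disjoint_left]
    rintro ω h1' ⟨h2, _⟩
    simp only [Set.mem_setOf_eq] at h1' h2
    rw [h1'] at h2; exact absurd h2 (by simp)
  rw [hsplit, measure_union hdisj hmeas1]
  have e1 : Q {ω : Om | ω (ib b) = false} = ENNReal.ofReal (1 - βb) := by
    have : {ω : Om | ω (ib b) = false}
        = {ω : Om | ∀ σ ∈ ({ib b} : Finset I), ω σ = (fun _ => false) σ} := by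
      ext ω; simp
    rw [this, hQ ({ib b}) (fun _ => false)]
    simp [gwP_ib, hβb]
  have e2 : Q ({ω : Om | ω (ib b) = true} ∩ (Tb b) ⁻¹' (K n))
      = ENNReal.ofReal βb * ENNReal.ofReal (q β₀ β₁ n) := by
    rw [prob_single_inter hQ h0 h1 hBdep (ib_not_mem_image b n) true]
    congr 1
    · congr 1; rw [gwP_ib]; simp [hβb]
    · rw [← Measure.map_apply (measurable_Tb b) (dependsOn_K n).measurableSet]
      exact IH _ (hQ.map b)
  rw [e1, e2, ← ENNReal.ofReal_mul hβb0, ← ENNReal.ofReal_add (by linarith)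
    (mul_nonneg hβb0 hq0)]

lemma q_nonneg (h0 : β₀ ∈ Set.Ioo (0:ℝ) 1) (h1 : β₁ ∈ Set.Ioo (0:ℝ) 1) (n : ℕ) :
    0 ≤ q β₀ β₁ n := by
  induction n with
  | zero => simp [q]
  | succ n ih =>
      have e0 := h0.1; have e1 := h0.2; have f0 := h1.1; have f1 := h1.2
      have : 0 ≤ 1 - β₀ + β₀ * q β₀ β₁ n := by nlinarith
      have : 0 ≤ 1 - β₁ + β₁ * q β₀ β₁ n := by nlinarith
      simp only [q]
      positivity

lemma q_le_one (h0 : β₀ ∈ Set.Ioo (0:ℝ) 1) (h1 : β₁ ∈ Set.Ioo (0:ℝ) 1) (n : ℕ) :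
    q β₀ β₁ n ≤ 1 := by
  induction n with
  | zero => simp [q]
  | succ n ih =>
      have e0 := h0.1; have e1 := h0.2; have f0 := h1.1; have f1 := h1.2
      have hq0 := q_nonneg h0 h1 n
      simp only [q]
      have a1 : 1 - β₀ + β₀ * q β₀ β₁ n ≤ 1 := by nlinarith
      have b0 : 0 ≤ 1 - β₁ + β₁ * q β₀ β₁ n := by nlinarith
      have b1 : 1 - β₁ + β₁ * q β₀ β₁ n ≤ 1 := by nlinarith
      exact mul_le_one₀ a1 b0 b1

lemma K_prob (h0 : β₀ ∈ Set.Ioo (0:ℝ) 1) (h1 : β₁ ∈ Set.Ioo (0:ℝ) 1) :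
    ∀ n, ∀ Q : Measure Om, FDD β₀ β₁ Q → Q (K n) = ENNReal.ofReal (q β₀ β₁ n) := by
  intro n
  induction n with
  | zero => intro Q hQ; simp [K_zero, q]
  | succ n IH =>
      intro Q hQ
      have hq0 := q_nonneg h0 h1 n
      have hq1 := q_le_one h0 h1 n
      rw [K_succ n,
        prob_inter hQ h0 h1 (dependsOn_Fb false n) (dependsOn_Fb true n) (disjoint_Db n),
        Fb_prob h0 h1 hQ n false IH hq0 hq1, Fb_prob h0 h1 hQ n true IH hq0 hq1]
      have n0 : 0 ≤ 1 - β₀ + β₀ * q β₀ β₁ n := by nlinarith [h0.1, h0.2]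
      simp only [Bool.cond_false, Bool.cond_true]
      rw [← ENNReal.ofReal_mul n0]
      simp only [q]

end GWaux

namespace GWaux

variable {β₀ β₁ : ℝ}

lemma g_mono (h0 : β₀ ∈ Set.Ioo (0:ℝ) 1) (h1 : β₁ ∈ Set.Ioo (0:ℝ) 1)
    {s t : ℝ} (hs : 0 ≤ s) (hst : s ≤ t) :
    (1 - β₀ + β₀ * s) * (1 - β₁ + β₁ * s) ≤ (1 - β₀ + β₀ * t) * (1 - β₁ + β₁ * t) := by
  have e0 := h0.1; have e1 := h0.2; have f0 := h1.1; have f1 := h1.2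
  apply mul_le_mul
  · nlinarith
  · nlinarith
  · nlinarith
  · nlinarith

lemma L_nonneg (h0 : β₀ ∈ Set.Ioo (0:ℝ) 1) (h1 : β₁ ∈ Set.Ioo (0:ℝ) 1) :
    0 ≤ (1 - β₀) * (1 - β₁) / (β₀ * β₁) := by
  have e0 := h0.1; have e1 := h0.2; have f0 := h1.1; have f1 := h1.2
  have : 0 ≤ (1-β₀)*(1-β₁) := by nlinarith
  positivity

lemma L_fix (h0 : β₀ ∈ Set.Ioo (0:ℝ) 1) (h1 : β₁ ∈ Set.Ioo (0:ℝ) 1) :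
    (1 - β₀ + β₀ * ((1 - β₀) * (1 - β₁) / (β₀ * β₁)))
      * (1 - β₁ + β₁ * ((1 - β₀) * (1 - β₁) / (β₀ * β₁)))
      = (1 - β₀) * (1 - β₁) / (β₀ * β₁) := by
  have e0 := h0.1.ne'; have f0 := h1.1.ne'
  field_simp
  ring

lemma L_le_one (h0 : β₀ ∈ Set.Ioo (0:ℝ) 1) (h1 : β₁ ∈ Set.Ioo (0:ℝ) 1)
    (hsum : 1 ≤ β₀ + β₁) : (1 - β₀) * (1 - β₁) / (β₀ * β₁) ≤ 1 := by
  have e0 := h0.1; have f0 := h1.1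
  rw [div_le_one (by positivity)]
  nlinarith

lemma q_le_L (h0 : β₀ ∈ Set.Ioo (0:ℝ) 1) (h1 : β₁ ∈ Set.Ioo (0:ℝ) 1) (n : ℕ) :
    q β₀ β₁ n ≤ (1 - β₀) * (1 - β₁) / (β₀ * β₁) := by
  induction n with
  | zero => simpa [q] using L_nonneg h0 h1
  | succ n ih =>
      have hq0 := q_nonneg h0 h1 n
      calc q β₀ β₁ (n+1)
          = (1 - β₀ + β₀ * q β₀ β₁ n) * (1 - β₁ + β₁ * q β₀ β₁ n) := rfl
        _ ≤ _ := g_mono h0 h1 hq0 ih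
        _ = _ := L_fix h0 h1

lemma q_mono (h0 : β₀ ∈ Set.Ioo (0:ℝ) 1) (h1 : β₁ ∈ Set.Ioo (0:ℝ) 1) :
    Monotone (q β₀ β₁) := by
  apply monotone_nat_of_le_succ
  intro n
  induction n with
  | zero =>
      have e0 := h0.1; have e1 := h0.2; have f0 := h1.1; have f1 := h1.2
      simp only [q]
      nlinarith
  | succ n ih =>
      have hq0 := q_nonneg h0 h1 n
      exact g_mono h0 h1 hq0 ih

lemma q_tendsto (h0 : β₀ ∈ Set.Ioo (0:ℝ) 1) (h1 : β₁ ∈ Set.Ioo (0:ℝ) 1)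
    (hsum : 1 ≤ β₀ + β₁) :
    Filter.Tendsto (q β₀ β₁) Filter.atTop (nhds ((1 - β₀) * (1 - β₁) / (β₀ * β₁))) := by
  set L : ℝ := (1 - β₀) * (1 - β₁) / (β₀ * β₁) with hL
  have hbdd : BddAbove (Set.range (q β₀ β₁)) := by
    refine ⟨L, ?_⟩
    rintro x ⟨n, rfl⟩
    exact q_le_L h0 h1 n
  set L' : ℝ := ⨆ n, q β₀ β₁ n with hL'
  have htend : Filter.Tendsto (q β₀ β₁) Filter.atTop (nhds L') :=
    tendsto_atTop_ciSup (q_mono h0 h1) hbdd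
  have htend2 : Filter.Tendsto (fun n => q β₀ β₁ (n + 1)) Filter.atTop (nhds L') :=
    htend.comp (Filter.tendsto_add_atTop_nat 1)
  have htend3 : Filter.Tendsto (fun n => q β₀ β₁ (n + 1)) Filter.atTop
      (nhds ((1 - β₀ + β₀ * L') * (1 - β₁ + β₁ * L'))) := by
    have hc : Continuous (fun x : ℝ => (1 - β₀ + β₀ * x) * (1 - β₁ + β₁ * x)) := by
      continuity
    have := (hc.tendsto L').comp htend
    convert this using 1
    rfl
  have gfix : (1 - β₀ + β₀ * L') * (1 - β₁ + β₁ * L') = L' :=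
    tendsto_nhds_unique htend3 htend2
  have hroot : (L' - 1) * (β₀ * β₁ * L' - (1 - β₀) * (1 - β₁)) = 0 := by
    linear_combination gfix
  have hle : L' ≤ L := ciSup_le (q_le_L h0 h1)
  have hLL' : L' = L := by
    rcases mul_eq_zero.mp hroot with h | h
    · have h1' : L' = 1 := by linarith
      have := L_le_one h0 h1 hsum
      linarith
    · have hne : β₀ * β₁ ≠ 0 := by
        have := h0.1; have := h1.1; positivity
      rw [hL]
      rw [eq_div_iff hne]; linear_combination h
  rwa [hLL'] at htend

lemma iSup_ofReal_q (h0 : β₀ ∈ Set.Ioo (0:ℝ) 1) (h1 : β₁ ∈ Set.Ioo (0:ℝ) 1)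
    (hsum : 1 ≤ β₀ + β₁) :
    (⨆ n, ENNReal.ofReal (q β₀ β₁ n))
      = ENNReal.ofReal ((1 - β₀) * (1 - β₁) / (β₀ * β₁)) := by
  have hmono : Monotone (fun n => ENNReal.ofReal (q β₀ β₁ n)) :=
    fun m n h => ENNReal.ofReal_le_ofReal (q_mono h0 h1 h)
  have h1' : Filter.Tendsto (fun n => ENNReal.ofReal (q β₀ β₁ n)) Filter.atTop
      (nhds (⨆ n, ENNReal.ofReal (q β₀ β₁ n))) := tendsto_atTop_iSup hmono
  have h2' : Filter.Tendsto (fun n => ENNReal.ofReal (q β₀ β₁ n)) Filter.atTop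
      (nhds (ENNReal.ofReal ((1 - β₀) * (1 - β₁) / (β₀ * β₁)))) :=
    (ENNReal.continuous_ofReal.tendsto _).comp (q_tendsto h0 h1 hsum)
  exact tendsto_nhds_unique h1' h2'

lemma not_mem_of_K {ω : Om} {n : ℕ} (hω : ω ∈ K n) {σ : List Bool} (hlen : n ≤ σ.length) :
    σ ∉ gwTree ω := by
  intro h
  refine hω (σ.take n) ?_ (gwTree_prefix_closed (List.take_prefix n σ) h)
  simp [List.length_take, min_eq_left hlen]

lemma K_mono : Monotone K := by
  apply monotone_nat_of_le_succ
  intro n ω hω σ hσ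
  exact not_mem_of_K hω (by omega)

lemma infinite_eq_compl : {ω : Om | (gwTree ω).Infinite} = (⋃ n, K n)ᶜ := by
  ext ω
  simp only [Set.mem_setOf_eq, Set.mem_compl_iff, Set.mem_iUnion, not_exists]
  constructor
  · intro hinf n hK
    have hsub : gwTree ω ⊆ {l : List Bool | l.length < n} := by
      intro σ hσ
      by_contra hlen
      simp only [Set.mem_setOf_eq, not_lt] at hlen
      exact not_mem_of_K hK hlen hσ
    exact hinf (Set.Finite.subset (List.finite_length_lt Bool n) hsub)
  · intro h hfin
    have hbdd : BddAbove (List.length '' gwTree ω) := (hfin.image _).bddAbove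
    obtain ⟨N, hN⟩ := hbdd
    have hK : ω ∈ K (N + 1) := by
      intro σ hσ hmem
      have : σ.length ≤ N := hN ⟨σ, hmem, rfl⟩
      omega
    exact h (N + 1) hK

end GWaux

/-- For `β₀, β₁ ∈ (0,1)` with `β₀ + β₁ ≥ 1`, the `P_{β₀,β₁}`-probability that
the Galton–Watson tree is infinite is `(a₂ - a₃)/a₂ = (β₀ + β₁ - 1)/(β₀ β₁)`, where
`a₂ = β₀β₁` and `a₃ = (1-β₀)(1-β₁)`. -/
theorem stmt7 (β₀ β₁ : ℝ) (h0 : β₀ ∈ Set.Ioo (0 : ℝ) 1) (h1 : β₁ ∈ Set.Ioo (0 : ℝ) 1)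
    (hsum : 1 ≤ β₀ + β₁)
    (P : Measure ({σ : List Bool // σ ≠ []} → Bool)) (hP : IsGWMeasure β₀ β₁ P) :
    P {ω | (gwTree ω).Infinite} =
      ENNReal.ofReal ((β₀ * β₁ - (1 - β₀) * (1 - β₁)) / (β₀ * β₁)) ∧
    (β₀ * β₁ - (1 - β₀) * (1 - β₁)) / (β₀ * β₁) = (β₀ + β₁ - 1) / (β₀ * β₁) := by
  obtain ⟨hPprob, hPfdd⟩ := hP
  have hβne : β₀ * β₁ ≠ 0 := by
    have := h0.1; have := h1.1; positivity
  constructor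
  · have hfdd : GWaux.FDD β₀ β₁ P := hPfdd
    have hKmeas : ∀ n, MeasurableSet (GWaux.K n) := fun n =>
      (GWaux.dependsOn_K n).measurableSet
    have hU : P (⋃ n, GWaux.K n) = ENNReal.ofReal ((1 - β₀) * (1 - β₁) / (β₀ * β₁)) := by
      rw [Directed.measure_iUnion (GWaux.K_mono.directed_le)]
      have : ∀ n, P (GWaux.K n) = ENNReal.ofReal (GWaux.q β₀ β₁ n) := fun n =>
        GWaux.K_prob h0 h1 n P hfdd
      simp only [this]
      exact GWaux.iSup_ofReal_q h0 h1 hsum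
    rw [GWaux.infinite_eq_compl,
      measure_compl (MeasurableSet.iUnion hKmeas) (measure_ne_top P _), hU, measure_univ,
      ← ENNReal.ofReal_one, ← ENNReal.ofReal_sub _ (GWaux.L_nonneg h0 h1)]
    congr 1
    rw [one_sub_div hβne]
  · congr 1
    ring
end
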